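/- arXiv:2408.17349 — 4 statements merged into one kernel-verified Lean document; each statement's English description precedes it below -/
import Mathlib

section
/- Let X_1,…,X_n be bit-valued random variables (not assumed independent). Suppose each position i ∈ {1,…,n} is independently assigned to a 'test set' J_t with probability p_t and to a 'key set' J_k with probability p_k (and to neither with probability 1−p_t−p_k), independently of the X_i. Let Ω(n_X,n_K) be the event that exactly n_X positions land in the test set and exactly n_K positions land in the key set. Then, conditioned on Ω(n_X,n_K), Pr( (1/n_K)·Σ_{i∈J_k} X_i ≥ (1/n_X)·Σ_{i∈J_t} X_i + γ ) ≤ exp(−2γ² · n_K n_X² / ((n_K+n_X)(n_X+1))) for every γ > 0. -/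
open MeasureTheory ProbabilityTheory

section SerflingAux

open Finset Real

theorem hoeffding_scalar (p : ℝ) (hp0 : 0 ≤ p) (hp1 : p ≤ 1) (t : ℝ) :
    1 - p + p * exp t ≤ exp (t * p + t ^ 2 / 8) := by
  set D : ℝ → ℝ := fun s => 1 - p + p * exp s with hD
  have hDpos : ∀ s, 0 < D s := by
    intro s
    rcases eq_or_lt_of_le hp0 with h | h
    · simp [hD, ← h]
    · have : 0 < p * exp s := mul_pos h (exp_pos s)
      simp only [hD]; nlinarith
  set g : ℝ → ℝ := fun s => p + s / 4 - p * exp s / D s with hg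
  set f : ℝ → ℝ := fun s => s * p + s ^ 2 / 8 - log (D s) with hf
  have hD' : ∀ s, HasDerivAt D (p * exp s) s := by
    intro s
    exact (((Real.hasDerivAt_exp s).const_mul p).const_add (1 - p))
  have hfd : ∀ s, HasDerivAt f (g s) s := by
    intro s
    have h1 : HasDerivAt (fun s : ℝ => s * p + s ^ 2 / 8) (p + s / 4) s := by
      have := ((hasDerivAt_id s).mul_const p).add ((hasDerivAt_pow 2 s).div_const 8)
      exact this.congr_deriv (by norm_num; ring)
    have h2 : HasDerivAt (fun s => log (D s)) (p * exp s / D s) s :=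
      (hD' s).log (hDpos s).ne'
    exact h1.sub h2
  have hgd : ∀ s, HasDerivAt g
      (1 / 4 - (p * exp s * D s - p * exp s * (p * exp s)) / (D s) ^ 2) s := by
    intro s
    have hnum : HasDerivAt (fun s => p * exp s) (p * exp s) s :=
      (Real.hasDerivAt_exp s).const_mul p
    have h2 : HasDerivAt (fun s => p * exp s / D s)
        ((p * exp s * D s - p * exp s * (p * exp s)) / (D s) ^ 2) s :=
      hnum.div (hD' s) (hDpos s).ne'
    have h1 : HasDerivAt (fun s : ℝ => p + s / 4) (1 / 4) s := by
      simpa using ((hasDerivAt_id s).div_const 4).const_add p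
    exact h1.sub h2
  have hg'nonneg : ∀ s, 0 ≤ 1 / 4 - (p * exp s * D s - p * exp s * (p * exp s)) / (D s) ^ 2 := by
    intro s
    have hb : 0 ≤ p * exp s := mul_nonneg hp0 (exp_pos s).le
    have hnum : p * exp s * D s - p * exp s * (p * exp s) = (p * exp s) * (1 - p) := by
      simp only [hD]; ring
    rw [hnum, sub_nonneg, div_le_iff₀ (pow_pos (hDpos s) 2)]
    have : D s = (1 - p) + p * exp s := rfl
    nlinarith [sq_nonneg ((1 - p) - p * exp s)]
  have hgmono : Monotone g := by
    apply monotone_of_deriv_nonneg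
    · exact fun s => (hgd s).differentiableAt
    · intro s; rw [(hgd s).deriv]; exact hg'nonneg s
  have hg0 : g 0 = 0 := by simp [hg, hD]
  have hf0 : f 0 = 0 := by simp [hf, hD]
  have hfcont : Continuous f := by
    have : Differentiable ℝ f := fun s => (hfd s).differentiableAt
    exact this.continuous
  have hmonoIci : MonotoneOn f (Set.Ici 0) := by
    apply monotoneOn_of_deriv_nonneg (convex_Ici 0) hfcont.continuousOn
      (fun s _ => (hfd s).differentiableAt.differentiableWithinAt)
    intro s hs
    rw [(hfd s).deriv, ← hg0]
    exact hgmono (le_of_lt (by simpa using hs))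
  have hantiIic : AntitoneOn f (Set.Iic 0) := by
    apply antitoneOn_of_deriv_nonpos (convex_Iic 0) hfcont.continuousOn
      (fun s _ => (hfd s).differentiableAt.differentiableWithinAt)
    intro s hs
    rw [(hfd s).deriv, ← hg0]
    exact hgmono (le_of_lt (by simpa using hs))
  have hfnonneg : 0 ≤ f t := by
    rcases le_total 0 t with h | h
    · rw [← hf0]; exact hmonoIci Set.self_mem_Ici h h
    · rw [← hf0]; exact hantiIic h Set.self_mem_Iic h
  have : log (D t) ≤ t * p + t ^ 2 / 8 := by
    have := hfnonneg
    simp only [hf] at this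
    linarith
  calc 1 - p + p * exp t = D t := rfl
    _ ≤ exp (t * p + t ^ 2 / 8) := by
        rw [← Real.exp_log (hDpos t)]
        exact Real.exp_le_exp.mpr this

theorem emp_hoeffding {ι : Type*} (U : Finset ι) (hU : U.Nonempty) (x : ι → ℝ)
    (hx0 : ∀ i, 0 ≤ x i) (hx1 : ∀ i, x i ≤ 1) (t : ℝ) :
    ∑ i ∈ U, exp (t * x i) ≤
      U.card * exp (t * ((∑ i ∈ U, x i) / U.card) + t ^ 2 / 8) := by
  set N : ℝ := (U.card : ℝ) with hN
  have hNpos : 0 < N := by rw [hN]; exact_mod_cast card_pos.mpr hU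
  set S : ℝ := ∑ i ∈ U, x i with hS
  have hS0 : 0 ≤ S := Finset.sum_nonneg fun i _ => hx0 i
  have hSN : S ≤ N := by
    calc S ≤ ∑ _i ∈ U, (1:ℝ) := Finset.sum_le_sum fun i _ => hx1 i
      _ = N := by simp [hN]
  have hstep : ∀ i ∈ U, exp (t * x i) ≤ 1 - x i + x i * exp t := by
    intro i _
    have := convexOn_exp.2 (Set.mem_univ 0) (Set.mem_univ t)
      (by linarith [hx1 i] : (0:ℝ) ≤ 1 - x i) (hx0 i) (by ring)
    simpa [smul_eq_mul, mul_comm] using this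
  have h1 : ∑ i ∈ U, exp (t * x i) ≤ N - S + S * exp t := by
    calc ∑ i ∈ U, exp (t * x i) ≤ ∑ i ∈ U, (1 - x i + x i * exp t) :=
          Finset.sum_le_sum hstep
      _ = N - S + S * exp t := by
          rw [Finset.sum_add_distrib, Finset.sum_sub_distrib, ← Finset.sum_mul]
          simp [hN, hS]
  have h2 : N - S + S * exp t = N * (1 - S / N + (S / N) * exp t) := by
    field_simp
  have h3 : 1 - S / N + (S / N) * exp t ≤ exp (t * (S / N) + t ^ 2 / 8) :=
    hoeffding_scalar (S / N) (div_nonneg hS0 hNpos.le)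
      ((div_le_one hNpos).mpr hSN) t
  calc ∑ i ∈ U, exp (t * x i) ≤ N * (1 - S / N + (S / N) * exp t) := by rw [← h2]; exact h1
    _ ≤ N * exp (t * (S / N) + t ^ 2 / 8) := by
        exact mul_le_mul_of_nonneg_left h3 hNpos.le

theorem double_count {ι : Type*} [DecidableEq ι] (U : Finset ι) (k : ℕ) (F : Finset ι → ℝ) :
    ∑ i ∈ U, ∑ K ∈ (U.erase i).powersetCard k, F (insert i K)
      = (k + 1 : ℝ) * ∑ K ∈ U.powersetCard (k + 1), F K := by
  have hR : (k + 1 : ℝ) * ∑ K ∈ U.powersetCard (k + 1), F K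
      = ∑ K ∈ U.powersetCard (k + 1), ∑ _i ∈ K, F K := by
    rw [Finset.mul_sum]
    refine Finset.sum_congr rfl fun K hK => ?_
    rw [Finset.sum_const, nsmul_eq_mul, (Finset.mem_powersetCard.mp hK).2]
    push_cast; ring
  rw [hR, Finset.sum_sigma', Finset.sum_sigma']
  refine Finset.sum_nbij' (fun p => ⟨insert p.1 p.2, p.1⟩) (fun q => ⟨q.2, q.1.erase q.2⟩)
    ?_ ?_ ?_ ?_ ?_
  · rintro ⟨i, K⟩ hp
    simp only [Finset.mem_sigma] at hp ⊢
    obtain ⟨hi, hK⟩ := hp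
    rw [Finset.mem_powersetCard] at hK
    obtain ⟨hsub, hcard⟩ := hK
    have hiK : i ∉ K := fun h => (Finset.mem_erase.mp (hsub h)).1 rfl
    refine ⟨Finset.mem_powersetCard.mpr ⟨?_, ?_⟩, Finset.mem_insert_self i K⟩
    · exact Finset.insert_subset hi (hsub.trans (Finset.erase_subset i U))
    · rw [Finset.card_insert_of_notMem hiK, hcard]
  · rintro ⟨K, i⟩ hq
    simp only [Finset.mem_sigma] at hq ⊢
    obtain ⟨hK, hi⟩ := hq
    rw [Finset.mem_powersetCard] at hK
    obtain ⟨hsub, hcard⟩ := hK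
    refine ⟨hsub hi, Finset.mem_powersetCard.mpr ⟨?_, ?_⟩⟩
    · exact Finset.erase_subset_erase i hsub
    · rw [Finset.card_erase_of_mem hi, hcard]; rfl
  · rintro ⟨i, K⟩ hp
    simp only [Finset.mem_sigma] at hp
    obtain ⟨hi, hK⟩ := hp
    have hiK : i ∉ K := fun h =>
      (Finset.mem_erase.mp ((Finset.mem_powersetCard.mp hK).1 h)).1 rfl
    simp [Finset.erase_insert hiK]
  · rintro ⟨K, i⟩ hq
    simp only [Finset.mem_sigma] at hq
    simp [Finset.insert_erase hq.2]
  · rintro ⟨i, K⟩ _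
    rfl

set_option maxHeartbeats 1000000 in
theorem mgf_powersetCard {ι : Type*} [DecidableEq ι] (x : ι → ℝ)
    (hx0 : ∀ i, 0 ≤ x i) (hx1 : ∀ i, x i ≤ 1) (lam : ℝ) :
    ∀ (k : ℕ) (U : Finset ι), k ≤ U.card →
    ∑ K ∈ U.powersetCard k, exp (lam * ∑ i ∈ K, x i) ≤
      (U.powersetCard k).card *
        exp (lam * k * ((∑ i ∈ U, x i) / U.card) +
          (k * ((U.card : ℝ) - k + 1) / U.card) * lam ^ 2 / 8) := by
  intro k
  induction k with
  | zero => intro U _; simp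
  | succ k IH =>
    intro U hk
    have hUne : U.Nonempty := Finset.card_pos.mp (lt_of_lt_of_le (Nat.succ_pos k) hk)
    set N : ℕ := U.card with hNdef
    set R : ℝ := (N : ℝ) with hRdef
    set S : ℝ := ∑ i ∈ U, x i with hSdef
    have hRpos : 0 < R := by rw [hRdef]; exact_mod_cast Finset.card_pos.mpr hUne
    rcases Nat.eq_zero_or_pos k with hk0 | hk1
    · -- k = 0 : directly empirical Hoeffding
      subst hk0
      have h1 : ∑ K ∈ U.powersetCard 1, exp (lam * ∑ i ∈ K, x i)
          = ∑ i ∈ U, exp (lam * x i) := by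
        rw [Finset.powersetCard_one, Finset.sum_map]
        simp
      have h2 := emp_hoeffding U hUne x hx0 hx1 lam
      rw [h1]
      have h3 : ((((0:ℕ)+1 : ℕ) : ℝ) * (R - (((0:ℕ)+1 : ℕ) : ℝ) + 1) / R) = 1 := by
        push_cast
        field_simp
        ring
      calc ∑ i ∈ U, exp (lam * x i) ≤ R * exp (lam * (S / R) + lam ^ 2 / 8) := h2
        _ = (U.powersetCard 1).card *
              exp (lam * (((0:ℕ)+1 : ℕ) : ℝ) * (S / R) +
                ((((0:ℕ)+1 : ℕ) : ℝ) * (R - (((0:ℕ)+1 : ℕ) : ℝ) + 1) / R) * lam ^ 2 / 8) := by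
            rw [Finset.card_powersetCard, Nat.choose_one_right, h3]
            push_cast
            ring_nf
            exact mul_comm _ _
    · -- k ≥ 1, so N ≥ 2
      have hN2 : 2 ≤ N := le_trans (by omega) hk
      have hR1pos : 0 < R - 1 := by
        have : (2 : ℝ) ≤ R := by rw [hRdef]; exact_mod_cast hN2
        linarith
      have hR1ne : R - 1 ≠ 0 := ne_of_gt hR1pos
      have hkR : (k : ℝ) ≤ R - 1 := by
        have h : ((k:ℝ) + 1) ≤ R := by rw [hRdef]; exact_mod_cast hk
        linarith
      have hknn : (0:ℝ) ≤ (k:ℝ) := Nat.cast_nonneg k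
      set c : ℝ := (R - 1 - k) / (R - 1) with hcdef
      have hc0 : 0 ≤ c := div_nonneg (by linarith) hR1pos.le
      have hc1 : c ≤ 1 := by
        rw [hcdef, div_le_one hR1pos]
        linarith
      set t : ℝ := lam * c with htdef
      set Cr : ℝ := ((N - 1).choose k : ℝ) with hCrdef
      have hCr0 : 0 ≤ Cr := Nat.cast_nonneg _
      set B : ℝ := (k : ℝ) * (R - k) / (R - 1) with hBdef
      set A : ℝ := B * lam ^ 2 / 8 + lam * k * (S / (R - 1)) with hAdef
      -- bound each i-term
      have hbound : ∀ i ∈ U,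
          ∑ K ∈ (U.erase i).powersetCard k, exp (lam * ∑ j ∈ insert i K, x j)
            ≤ Cr * (exp A * exp (t * x i)) := by
        intro i hi
        have hcardE : (U.erase i).card = N - 1 := by
          rw [Finset.card_erase_of_mem hi]
        have hcastE : ((U.erase i).card : ℝ) = R - 1 := by
          rw [hcardE, hRdef]
          have h1 : 1 ≤ N := le_trans one_le_two hN2
          push_cast [Nat.cast_sub h1]
          ring
        have hsumE : ∑ j ∈ U.erase i, x j = S - x i := by
          rw [hSdef, Finset.sum_erase_eq_sub hi]
        have hstep1 : ∑ K ∈ (U.erase i).powersetCard k, exp (lam * ∑ j ∈ insert i K, x j)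
            = exp (lam * x i) * ∑ K ∈ (U.erase i).powersetCard k, exp (lam * ∑ j ∈ K, x j) := by
          rw [Finset.mul_sum]
          refine Finset.sum_congr rfl fun K hK => ?_
          have hiK : i ∉ K := fun h =>
            (Finset.mem_erase.mp ((Finset.mem_powersetCard.mp hK).1 h)).1 rfl
          rw [Finset.sum_insert hiK, mul_add, Real.exp_add]
        have hkE : k ≤ (U.erase i).card := by rw [hcardE]; omega
        have hIH := IH (U.erase i) hkE
        rw [hsumE, hcastE, Finset.card_powersetCard, hcardE] at hIH
        have hBeq : ((k : ℝ) * (R - 1 - k + 1) / (R - 1)) = B := by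
          rw [hBdef]; ring_nf
        rw [hBeq] at hIH
        rw [hstep1]
        calc exp (lam * x i) * ∑ K ∈ (U.erase i).powersetCard k, exp (lam * ∑ j ∈ K, x j)
            ≤ exp (lam * x i) * (Cr * exp (lam * k * ((S - x i) / (R - 1)) + B * lam ^ 2 / 8)) :=
              mul_le_mul_of_nonneg_left hIH (exp_nonneg _)
          _ = Cr * (exp A * exp (t * x i)) := by
              rw [← Real.exp_add, mul_left_comm, ← Real.exp_add]
              congr 2
              rw [hAdef, htdef, hcdef]
              field_simp
              ring
      -- sum the bounds
      have hsum1 : ∑ i ∈ U, ∑ K ∈ (U.erase i).powersetCard k, exp (lam * ∑ j ∈ insert i K, x j)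
          ≤ Cr * exp A * ∑ i ∈ U, exp (t * x i) := by
        calc _ ≤ ∑ i ∈ U, Cr * (exp A * exp (t * x i)) := Finset.sum_le_sum hbound
          _ = Cr * exp A * ∑ i ∈ U, exp (t * x i) := by
              rw [Finset.mul_sum]
              exact Finset.sum_congr rfl fun i _ => by ring
      have hemp := emp_hoeffding U hUne x hx0 hx1 t
      have hsum2 : Cr * exp A * ∑ i ∈ U, exp (t * x i)
          ≤ Cr * exp A * (R * exp (t * (S / R) + t ^ 2 / 8)) :=
        mul_le_mul_of_nonneg_left hemp (mul_nonneg hCr0 (exp_nonneg _))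
      -- combine exponents
      have hexpcomb : exp A * exp (t * (S / R) + t ^ 2 / 8)
          ≤ exp (lam * (k + 1) * (S / R) +
              (((k:ℝ) + 1) * (R - ((k:ℝ) + 1) + 1) / R) * lam ^ 2 / 8) := by
        rw [← Real.exp_add]
        apply Real.exp_le_exp.mpr
        have heq : lam * k * (S / (R - 1)) + t * (S / R) = lam * (k + 1) * (S / R) := by
          rw [htdef, hcdef]
          field_simp
          ring
        -- coefficient inequality : B + c^2 ≤ (k+1)(R-k)/R
        have hcoef : B + c ^ 2 ≤ ((k:ℝ) + 1) * (R - ((k:ℝ) + 1) + 1) / R := by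
          rw [hBdef, hcdef, div_pow,
            div_add_div _ _ hR1ne (pow_ne_zero 2 hR1ne),
            div_le_div_iff₀ (mul_pos hR1pos (pow_pos hR1pos 2)) hRpos]
          have hid : ((k:ℝ) + 1) * (R - ((k:ℝ) + 1) + 1) * ((R - 1) * (R - 1) ^ 2)
              - ((k:ℝ) * (R - (k:ℝ)) * (R - 1) ^ 2 + (R - 1 - (k:ℝ)) ^ 2 * (R - 1)) * R
              = (k:ℝ) * (R - 1 - (k:ℝ)) * (R - 1) := by ring
          have hpos := mul_nonneg (mul_nonneg hknn
            (by linarith : (0:ℝ) ≤ R - 1 - (k:ℝ))) hR1pos.le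
          linarith
        have ht2 : B * lam ^ 2 / 8 + t ^ 2 / 8
            ≤ (((k:ℝ) + 1) * (R - ((k:ℝ) + 1) + 1) / R) * lam ^ 2 / 8 := by
          have : t ^ 2 = c ^ 2 * lam ^ 2 := by rw [htdef]; ring
          rw [this]
          have := mul_le_mul_of_nonneg_right hcoef (sq_nonneg lam)
          linarith
        rw [hAdef]
        linarith [heq, ht2]
      -- count: Cr * R = (k+1) * N.choose (k+1)
      have hcount : Cr * R = (k + 1 : ℝ) * (N.choose (k + 1) : ℝ) := by
        rw [hCrdef, hRdef]
        have h1 : 1 ≤ N := le_trans one_le_two hN2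
        have := Nat.add_one_mul_choose_eq (N - 1) k
        have hsucc : N - 1 + 1 = N := by omega
        rw [hsucc] at this
        have hcast : (N : ℝ) * ((N - 1).choose k : ℝ) = ((N.choose (k+1)) : ℝ) * ((k+1 : ℕ) : ℝ) := by
          exact_mod_cast congrArg (Nat.cast : ℕ → ℝ) this
        push_cast at hcast ⊢
        linarith
      -- final assembly
      have hfinal : (k + 1 : ℝ) * ∑ K ∈ U.powersetCard (k + 1), exp (lam * ∑ i ∈ K, x i)
          ≤ (k + 1 : ℝ) * ((N.choose (k + 1) : ℝ) *
              exp (lam * (k + 1) * (S / R) +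
                (((k:ℝ) + 1) * (R - ((k:ℝ) + 1) + 1) / R) * lam ^ 2 / 8)) := by
        rw [← double_count U k (fun K => exp (lam * ∑ i ∈ K, x i))]
        calc _ ≤ Cr * exp A * (R * exp (t * (S / R) + t ^ 2 / 8)) := le_trans hsum1 hsum2
          _ = Cr * R * (exp A * exp (t * (S / R) + t ^ 2 / 8)) := by ring
          _ ≤ Cr * R * exp (lam * (k + 1) * (S / R) +
                (((k:ℝ) + 1) * (R - ((k:ℝ) + 1) + 1) / R) * lam ^ 2 / 8) := by
              apply mul_le_mul_of_nonneg_left hexpcomb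
              exact mul_nonneg hCr0 hRpos.le
          _ = _ := by rw [hcount]; ring
      have hk1pos : (0:ℝ) < (k + 1 : ℝ) := by positivity
      have hres := (mul_le_mul_iff_of_pos_left hk1pos).mp hfinal
      rw [Finset.card_powersetCard]
      push_cast
      push_cast at hres
      convert hres using 3 <;> ring

theorem count_bad {ι : Type*} [DecidableEq ι] (x : ι → ℝ)
    (hx0 : ∀ i, 0 ≤ x i) (hx1 : ∀ i, x i ≤ 1)
    (m k : ℕ) (hm : 0 < m) (hk : 0 < k) (U : Finset ι) (hU : U.card = m + k)
    (γ : ℝ) (hγ : 0 < γ) :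
    (((U.powersetCard k).filter
        (fun K => (∑ i ∈ U \ K, x i) / (m : ℝ) + γ ≤ (∑ i ∈ K, x i) / (k : ℝ))).card : ℝ)
      ≤ ((U.powersetCard k).card : ℝ) *
          Real.exp (-2 * γ ^ 2 * ((k : ℝ) * (m : ℝ) ^ 2 / (((k : ℝ) + (m : ℝ)) * ((m : ℝ) + 1)))) := by
  have hm' : (0:ℝ) < m := by exact_mod_cast hm
  have hk' : (0:ℝ) < k := by exact_mod_cast hk
  set R : ℝ := (m : ℝ) + k with hRdef
  have hRpos : 0 < R := by positivity
  have hcardU : (U.card : ℝ) = R := by rw [hU]; push_cast; ring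
  set S : ℝ := ∑ i ∈ U, x i with hSdef
  set θ : ℝ := ((k : ℝ) * S + γ * k * m) / R with hθdef
  set lam : ℝ := 4 * γ * m / (m + 1) with hlamdef
  have hlampos : 0 < lam := by positivity
  -- members of the filter have large sum
  have hmem : ∀ K ∈ (U.powersetCard k).filter
      (fun K => (∑ i ∈ U \ K, x i) / (m : ℝ) + γ ≤ (∑ i ∈ K, x i) / (k : ℝ)),
      θ ≤ ∑ i ∈ K, x i := by
    intro K hK
    rw [Finset.mem_filter] at hK
    obtain ⟨hKp, hcond⟩ := hK
    have hsub : K ⊆ U := (Finset.mem_powersetCard.mp hKp).1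
    have hsdiff : ∑ i ∈ U \ K, x i = S - ∑ i ∈ K, x i := by
      rw [hSdef, ← Finset.sum_sdiff hsub]; ring
    rw [hsdiff] at hcond
    rw [hθdef, div_le_iff₀ hRpos]
    have e1 : ((S - ∑ i ∈ K, x i) / (m:ℝ) + γ) * ((m:ℝ) * k)
        = (k:ℝ) * (S - ∑ i ∈ K, x i) + γ * m * k := by
      field_simp
    have e2 : ((∑ i ∈ K, x i) / (k:ℝ)) * ((m:ℝ) * k) = (∑ i ∈ K, x i) * m := by
      field_simp
    have h2 := mul_le_mul_of_nonneg_right hcond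
      (by positivity : (0:ℝ) ≤ (m:ℝ) * k)
    rw [e1, e2] at h2
    rw [hRdef]
    nlinarith [h2]
  -- Chernoff
  have hones : (((U.powersetCard k).filter
      (fun K => (∑ i ∈ U \ K, x i) / (m : ℝ) + γ ≤ (∑ i ∈ K, x i) / (k : ℝ))).card : ℝ)
      ≤ ∑ K ∈ (U.powersetCard k).filter
          (fun K => (∑ i ∈ U \ K, x i) / (m : ℝ) + γ ≤ (∑ i ∈ K, x i) / (k : ℝ)),
          exp (lam * ((∑ i ∈ K, x i) - θ)) := by
    rw [Finset.card_eq_sum_ones]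
    push_cast
    apply Finset.sum_le_sum
    intro K hK
    have h0 : 0 ≤ lam * ((∑ i ∈ K, x i) - θ) :=
      mul_nonneg hlampos.le (by linarith [hmem K hK])
    calc (1:ℝ) = exp 0 := (Real.exp_zero).symm
      _ ≤ exp _ := Real.exp_le_exp.mpr h0
  have hsup : ∑ K ∈ (U.powersetCard k).filter
          (fun K => (∑ i ∈ U \ K, x i) / (m : ℝ) + γ ≤ (∑ i ∈ K, x i) / (k : ℝ)),
          exp (lam * ((∑ i ∈ K, x i) - θ))
      ≤ ∑ K ∈ U.powersetCard k, exp (lam * ((∑ i ∈ K, x i) - θ)) :=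
    Finset.sum_le_sum_of_subset_of_nonneg (Finset.filter_subset _ _)
      (fun _ _ _ => (Real.exp_pos _).le)
  have hfact : ∑ K ∈ U.powersetCard k, exp (lam * ((∑ i ∈ K, x i) - θ))
      = exp (-(lam * θ)) * ∑ K ∈ U.powersetCard k, exp (lam * ∑ i ∈ K, x i) := by
    rw [Finset.mul_sum]
    refine Finset.sum_congr rfl fun K _ => ?_
    rw [← Real.exp_add]
    congr 1
    ring
  have hmgf := mgf_powersetCard x hx0 hx1 lam k U (by omega)
  rw [hcardU] at hmgf
  have hfinal : exp (-(lam * θ)) * ∑ K ∈ U.powersetCard k, exp (lam * ∑ i ∈ K, x i)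
      ≤ ((U.powersetCard k).card : ℝ) *
          exp (-(lam * θ) + (lam * k * (S / R) + (k * (R - k + 1) / R) * lam ^ 2 / 8)) := by
    calc exp (-(lam * θ)) * ∑ K ∈ U.powersetCard k, exp (lam * ∑ i ∈ K, x i)
        ≤ exp (-(lam * θ)) * (((U.powersetCard k).card : ℝ) *
            exp (lam * k * (S / R) + (k * (R - k + 1) / R) * lam ^ 2 / 8)) :=
          mul_le_mul_of_nonneg_left hmgf (Real.exp_pos _).le
      _ = _ := by rw [mul_left_comm, ← Real.exp_add]
  -- exponent arithmetic
  have hexp : -(lam * θ) + (lam * k * (S / R) + (k * (R - k + 1) / R) * lam ^ 2 / 8)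
      = -2 * γ ^ 2 * ((k : ℝ) * (m : ℝ) ^ 2 / (((k : ℝ) + (m : ℝ)) * ((m : ℝ) + 1))) := by
    rw [hθdef, hlamdef, hRdef]
    have hm1 : (m : ℝ) + 1 ≠ 0 := by positivity
    have hmk : (m : ℝ) + k ≠ 0 := by positivity
    have h1 : (m:ℝ) + (k:ℝ) - (k:ℝ) + 1 = (m:ℝ) + 1 := by ring
    field_simp
    ring
  calc (((U.powersetCard k).filter
        (fun K => (∑ i ∈ U \ K, x i) / (m : ℝ) + γ ≤ (∑ i ∈ K, x i) / (k : ℝ))).card : ℝ)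
      ≤ exp (-(lam * θ)) * ∑ K ∈ U.powersetCard k, exp (lam * ∑ i ∈ K, x i) := by
        rw [← hfact]; exact le_trans hones hsup
    _ ≤ ((U.powersetCard k).card : ℝ) *
          exp (-(lam * θ) + (lam * k * (S / R) + (k * (R - k + 1) / R) * lam ^ 2 / 8)) := hfinal
    _ = _ := by rw [hexp]

-- fiberwise decomposition of assignment counts
theorem assignment_fiberwise {n nX nK : ℕ}
    (q : Finset (Fin n) → Finset (Fin n) → Prop)
    [∀ T K, Decidable (q T K)] :
    (Finset.univ.filter (fun a : Fin n → Fin 3 =>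
        ((Finset.univ.filter fun i => a i = 0).card = nX ∧
         (Finset.univ.filter fun i => a i = 1).card = nK) ∧
        q (Finset.univ.filter fun i => a i = 0) (Finset.univ.filter fun i => a i = 1))).card
      = ∑ U ∈ Finset.univ.powersetCard (nX + nK),
          ((U.powersetCard nK).filter (fun K => q (U \ K) K)).card := by
  classical
  set T : (Fin n → Fin 3) → Finset (Fin n) := fun a => Finset.univ.filter fun i => a i = 0 with hT
  set K : (Fin n → Fin 3) → Finset (Fin n) := fun a => Finset.univ.filter fun i => a i = 1 with hK
  have hdisj : ∀ a, Disjoint (T a) (K a) := by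
    intro a
    rw [Finset.disjoint_left]
    intro i hi hi'
    rw [hT, Finset.mem_filter] at hi
    rw [hK, Finset.mem_filter] at hi'
    rw [hi.2] at hi'
    exact absurd hi'.2 (by decide)
  set s := Finset.univ.filter (fun a : Fin n → Fin 3 =>
      ((T a).card = nX ∧ (K a).card = nK) ∧ q (T a) (K a)) with hs
  have hmap : ∀ a ∈ s, T a ∪ K a ∈ Finset.univ.powersetCard (nX + nK) := by
    intro a ha
    rw [hs, Finset.mem_filter] at ha
    rw [Finset.mem_powersetCard]
    exact ⟨Finset.subset_univ _, by
      rw [Finset.card_union_of_disjoint (hdisj a), ha.2.1.1, ha.2.1.2]⟩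
  rw [Finset.card_eq_sum_card_fiberwise hmap]
  refine Finset.sum_congr rfl fun U hU => ?_
  have hUcard : U.card = nX + nK := (Finset.mem_powersetCard.mp hU).2
  -- bijection between the fiber and subsets of U
  apply Finset.card_nbij' (i := K) (j := fun K' => fun i => if i ∈ K' then 1 else if i ∈ U then 0 else 2)
  · -- maps into target
    intro a ha
    rw [Finset.mem_coe, Finset.mem_filter] at ha
    obtain ⟨has, hGa⟩ := ha
    rw [hs, Finset.mem_filter] at has
    obtain ⟨-, ⟨⟨hTc, hKc⟩, hq⟩⟩ := has
    have hTeq : T a = U \ K a := by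
      rw [← hGa, Finset.union_sdiff_cancel_right (hdisj a)]
    rw [Finset.mem_coe, Finset.mem_filter, Finset.mem_powersetCard]
    refine ⟨⟨?_, hKc⟩, ?_⟩
    · rw [← hGa]; exact Finset.subset_union_right
    · rw [← hTeq]; exact hq
  · -- inverse maps into fiber
    intro K' hK'
    rw [Finset.mem_coe, Finset.mem_filter, Finset.mem_powersetCard] at hK'
    obtain ⟨⟨hsub, hcard⟩, hq⟩ := hK'
    set a : Fin n → Fin 3 := fun i => if i ∈ K' then 1 else if i ∈ U then 0 else 2 with ha
    have hTa : T a = U \ K' := by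
      ext i
      rw [hT, Finset.mem_filter, Finset.mem_sdiff, ha]
      constructor
      · rintro ⟨-, h⟩
        by_cases h1 : i ∈ K'
        · simp [h1] at h
        · by_cases h2 : i ∈ U
          · exact ⟨h2, h1⟩
          · simp [h1, h2] at h
      · rintro ⟨h2, h1⟩
        refine ⟨Finset.mem_univ i, ?_⟩
        simp [h1, h2]
    have hKa : K a = K' := by
      ext i
      rw [hK, Finset.mem_filter, ha]
      constructor
      · rintro ⟨-, h⟩
        by_cases h1 : i ∈ K'
        · exact h1
        · by_cases h2 : i ∈ U <;> simp [h1, h2] at h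
      · intro h1
        exact ⟨Finset.mem_univ i, by simp [h1]⟩
    rw [Finset.mem_coe, Finset.mem_filter, hs, Finset.mem_filter, hTa, hKa]
    refine ⟨⟨Finset.mem_univ a, ⟨?_, hcard⟩, hq⟩, ?_⟩
    · rw [Finset.card_sdiff_of_subset hsub, hUcard, hcard]; omega
    · rw [Finset.sdiff_union_of_subset hsub]
  · -- left inverse
    intro a ha
    rw [Finset.mem_coe, Finset.mem_filter] at ha
    obtain ⟨has, hGa⟩ := ha
    have hTeq : T a = U \ K a := by
      rw [← hGa, Finset.union_sdiff_cancel_right (hdisj a)]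
    funext i
    by_cases h1 : i ∈ K a
    · have : a i = 1 := (Finset.mem_filter.mp h1).2
      simp [h1, this]
    · by_cases h2 : i ∈ U
      · have hiT : i ∈ T a := by
          rw [hTeq, Finset.mem_sdiff]; exact ⟨h2, h1⟩
        have : a i = 0 := (Finset.mem_filter.mp hiT).2
        simp [h1, h2, this]
      · have hiT : i ∉ T a := fun h => h2 (by rw [← hGa]; exact Finset.mem_union_left _ h)
        have h0 : a i ≠ 0 := fun h => hiT (Finset.mem_filter.mpr ⟨Finset.mem_univ i, h⟩)
        have h1' : a i ≠ 1 := fun h => h1 (Finset.mem_filter.mpr ⟨Finset.mem_univ i, h⟩)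
        have : a i = 2 := by omega
        simp [h1, h2, this]
  · -- right inverse
    intro K' hK'
    ext i
    rw [hK, Finset.mem_filter]
    constructor
    · rintro ⟨-, h⟩
      by_cases h1 : i ∈ K'
      · exact h1
      · by_cases h2 : i ∈ U <;> simp [h1, h2] at h
    · intro h1
      exact ⟨Finset.mem_univ i, by simp [h1]⟩

theorem count_assignments {n : ℕ} (x : Fin n → ℝ)
    (hx0 : ∀ i, 0 ≤ x i) (hx1 : ∀ i, x i ≤ 1)
    (nX nK : ℕ) (hnX : 0 < nX) (hnK : 0 < nK) (γ : ℝ) (hγ : 0 < γ) :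
    ((Finset.univ.filter (fun a : Fin n → Fin 3 =>
        ((Finset.univ.filter fun i => a i = 0).card = nX ∧
         (Finset.univ.filter fun i => a i = 1).card = nK) ∧
        (∑ i ∈ Finset.univ.filter (fun i => a i = 0), x i) / (nX:ℝ) + γ ≤
          (∑ i ∈ Finset.univ.filter (fun i => a i = 1), x i) / (nK:ℝ))).card : ℝ)
      ≤ ((Finset.univ.filter (fun a : Fin n → Fin 3 =>
          (Finset.univ.filter fun i => a i = 0).card = nX ∧
          (Finset.univ.filter fun i => a i = 1).card = nK)).card : ℝ) *
        Real.exp (-2 * γ^2 * ((nK:ℝ) * (nX:ℝ)^2 / (((nK:ℝ)+(nX:ℝ)) * ((nX:ℝ)+1)))) := by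
  classical
  have h1 := assignment_fiberwise (n := n) (nX := nX) (nK := nK)
    (q := fun T K => (∑ i ∈ T, x i) / (nX:ℝ) + γ ≤ (∑ i ∈ K, x i) / (nK:ℝ))
  have h2 := assignment_fiberwise (n := n) (nX := nX) (nK := nK)
    (q := fun _ _ => True)
  simp only [and_true, Finset.filter_true] at h2
  rw [h1, h2]
  push_cast
  calc ∑ U ∈ Finset.univ.powersetCard (nX + nK),
        (((U.powersetCard nK).filter
          (fun K => (∑ i ∈ U \ K, x i) / (nX:ℝ) + γ ≤ (∑ i ∈ K, x i) / (nK:ℝ))).card : ℝ)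
      ≤ ∑ U ∈ Finset.univ.powersetCard (nX + nK),
          ((U.powersetCard nK).card : ℝ) *
            Real.exp (-2 * γ^2 * ((nK:ℝ) * (nX:ℝ)^2 / (((nK:ℝ)+(nX:ℝ)) * ((nX:ℝ)+1)))) :=
        Finset.sum_le_sum fun U hU =>
          count_bad x hx0 hx1 nX nK hnX hnK U (Finset.mem_powersetCard.mp hU).2 γ hγ
    _ = _ := by rw [← Finset.sum_mul]

end SerflingAux

/-- **Serfling with IID sampling.** Bit-valued random variables `X₁,…,Xₙ` (not assumed
independent); each position is independently assigned to the test set (`A i = 0`) with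
probability `p_t`, to the key set (`A i = 1`) with probability `p_k`, or to neither
(`A i = 2`), independently of the `Xᵢ`.  Conditioned on the event that exactly `n_X`
positions are in the test set and exactly `n_K` in the key set,
`Pr( (1/n_K)·Σ_{key} Xᵢ ≥ (1/n_X)·Σ_{test} Xᵢ + γ )
  ≤ exp(−2γ² n_K n_X² / ((n_K+n_X)(n_X+1)))`. -/
theorem serfling_iid_sampling
    {Ω : Type*} [MeasurableSpace Ω] (μ : Measure Ω) [IsProbabilityMeasure μ]
    (n : ℕ) (X : Fin n → Ω → ℝ)
    (hX01 : ∀ i ω, X i ω = 0 ∨ X i ω = 1)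
    (hXmeas : ∀ i, Measurable (X i))
    (A : Fin n → Ω → Fin 3) (hAmeas : ∀ i, Measurable (A i))
    (pt pk : ENNReal)
    (hpt : ∀ i, μ {ω | A i ω = 0} = pt)
    (hpk : ∀ i, μ {ω | A i ω = 1} = pk)
    (hAindep : iIndepFun A μ)
    (hXA : IndepFun (fun ω => fun i => X i ω) (fun ω => fun i => A i ω) μ)
    (nX nK : ℕ) (hnX : 0 < nX) (hnK : 0 < nK)
    (γ : ℝ) (hγ : 0 < γ) :
    (μ[|{ω | (Finset.univ.filter fun i => A i ω = 0).card = nX ∧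
              (Finset.univ.filter fun i => A i ω = 1).card = nK}])
      {ω | (∑ i ∈ Finset.univ.filter (fun i => A i ω = 1), X i ω) / (nK : ℝ) ≥
            (∑ i ∈ Finset.univ.filter (fun i => A i ω = 0), X i ω) / (nX : ℝ) + γ} ≤
      ENNReal.ofReal
        (Real.exp (-2 * γ ^ 2 * ((nK : ℝ) * (nX : ℝ) ^ 2 /
          (((nK : ℝ) + (nX : ℝ)) * ((nX : ℝ) + 1))))) := by
  classical
  set ebound : ENNReal := ENNReal.ofReal
    (Real.exp (-2 * γ ^ 2 * ((nK : ℝ) * (nX : ℝ) ^ 2 /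
      (((nK : ℝ) + (nX : ℝ)) * ((nX : ℝ) + 1))))) with hedef
  -- the event sets
  set E : Set Ω := {ω | (Finset.univ.filter fun i => A i ω = 0).card = nX ∧
      (Finset.univ.filter fun i => A i ω = 1).card = nK} with hEdef
  set bad : Set Ω := {ω | (∑ i ∈ Finset.univ.filter (fun i => A i ω = 1), X i ω) / (nK : ℝ) ≥
      (∑ i ∈ Finset.univ.filter (fun i => A i ω = 0), X i ω) / (nX : ℝ) + γ} with hbaddef
  -- the finset of good assignments
  set C : Finset (Fin n → Fin 3) := Finset.univ.filter (fun a : Fin n → Fin 3 =>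
      (Finset.univ.filter fun i => a i = 0).card = nX ∧
      (Finset.univ.filter fun i => a i = 1).card = nK) with hCdef
  -- elementary events
  set S : (Fin n → Fin 3) → Set Ω := fun a => ⋂ i ∈ Finset.univ, A i ⁻¹' {a i} with hSdef
  have hSmem : ∀ a (ω : Ω), ω ∈ S a ↔ ∀ i, A i ω = a i := by
    intro a ω
    simp [hSdef]
  have hSmeas : ∀ a, MeasurableSet (S a) :=
    fun a => Finset.measurableSet_biInter _ fun i _ =>
      (hAmeas i) (measurableSet_singleton (a i))
  have hSdisj : (C : Set (Fin n → Fin 3)).PairwiseDisjoint S := by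
    intro a _ b _ hab
    rw [Function.onFun, Set.disjoint_left]
    intro ω hωa hωb
    exact hab (funext fun i => ((hSmem a ω).mp hωa i).symm.trans ((hSmem b ω).mp hωb i))
  -- the value of μ (S a) for a ∈ C
  set q : ENNReal := 1 - (pt + pk) with hqdef
  have hq : ∀ i, μ {ω | A i ω = 2} = q := by
    intro i
    have hcover : {ω | A i ω = 0} ∪ ({ω | A i ω = 1} ∪ {ω | A i ω = 2}) = Set.univ := by
      ext ω
      simp only [Set.mem_union, Set.mem_setOf_eq, Set.mem_univ, iff_true]
      omega
    have hd12 : Disjoint {ω | A i ω = 1} {ω | A i ω = 2} := by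
      rw [Set.disjoint_left]; intro ω h1 h2
      simp only [Set.mem_setOf_eq] at h1 h2
      rw [h1] at h2; exact absurd h2 (by decide)
    have hd012 : Disjoint {ω | A i ω = 0} ({ω | A i ω = 1} ∪ {ω | A i ω = 2}) := by
      rw [Set.disjoint_left]; intro ω h0 h12
      simp only [Set.mem_setOf_eq, Set.mem_union] at h0 h12
      rcases h12 with h | h <;> rw [h0] at h <;> exact absurd h (by decide)
    have hm1 : MeasurableSet {ω | A i ω = 1} := (hAmeas i) (measurableSet_singleton 1)
    have hm2 : MeasurableSet {ω | A i ω = 2} := (hAmeas i) (measurableSet_singleton 2)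
    have htot : pt + (pk + μ {ω | A i ω = 2}) = 1 := by
      rw [← hpt i, ← hpk i, ← measure_union hd12 hm2, ← measure_union hd012
        (hm1.union hm2), hcover, measure_univ]
    rw [hqdef]
    have hne : pt + pk ≠ ⊤ := by
      rw [← hpt i, ← hpk i]
      exact ENNReal.add_ne_top.mpr ⟨measure_ne_top μ _, measure_ne_top μ _⟩
    have h2 : μ {ω | A i ω = 2} + (pt + pk) = 1 := by rw [← htot]; ring
    exact ENNReal.eq_sub_of_add_eq hne h2
  -- value of μ (S a)
  set w : ENNReal := pt ^ nX * pk ^ nK * q ^ (n - (nX + nK)) with hwdef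
  have hpre : ∀ (i : Fin n) (v : Fin 3), A i ⁻¹' {v} = {ω | A i ω = v} := fun i v => rfl
  have hw : ∀ a ∈ C, μ (S a) = w := by
    intro a haC
    rw [hCdef, Finset.mem_filter] at haC
    obtain ⟨-, hTc, hKc⟩ := haC
    have hSa : μ (S a) = ∏ i ∈ Finset.univ, μ (A i ⁻¹' {a i}) :=
      hAindep.measure_inter_preimage_eq_mul Finset.univ
        (fun i _ => measurableSet_singleton (a i))
    set T : Finset (Fin n) := Finset.univ.filter (fun i => a i = 0) with hTdef
    set Kf : Finset (Fin n) := Finset.univ.filter (fun i => a i = 1) with hKfdef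
    set R : Finset (Fin n) := Finset.univ \ (T ∪ Kf) with hRdef
    have hdTK : Disjoint T Kf := by
      rw [Finset.disjoint_left]
      intro i hi hi'
      rw [hTdef, Finset.mem_filter] at hi
      rw [hKfdef, Finset.mem_filter] at hi'
      rw [hi.2] at hi'
      exact absurd hi'.2 (by decide)
    have hdR : Disjoint (T ∪ Kf) R := Finset.disjoint_sdiff
    have hu : (T ∪ Kf) ∪ R = Finset.univ :=
      Finset.union_sdiff_of_subset (Finset.subset_univ _)
    have hprodT : ∏ i ∈ T, μ (A i ⁻¹' {a i}) = pt ^ nX := by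
      rw [← hTc]
      rw [Finset.prod_congr rfl (fun i hi => ?_), Finset.prod_const]
      rw [hpre i (a i), (Finset.mem_filter.mp hi).2]
      exact hpt i
    have hprodK : ∏ i ∈ Kf, μ (A i ⁻¹' {a i}) = pk ^ nK := by
      rw [← hKc]
      rw [Finset.prod_congr rfl (fun i hi => ?_), Finset.prod_const]
      rw [hpre i (a i), (Finset.mem_filter.mp hi).2]
      exact hpk i
    have hRcard : R.card = n - (nX + nK) := by
      rw [hRdef, Finset.card_sdiff_of_subset (Finset.subset_univ _), Finset.card_union_of_disjoint hdTK,
        hTc, hKc, Finset.card_univ, Fintype.card_fin]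
    have hprodR : ∏ i ∈ R, μ (A i ⁻¹' {a i}) = q ^ (n - (nX + nK)) := by
      rw [← hRcard]
      rw [Finset.prod_congr rfl (fun i hi => ?_), Finset.prod_const]
      rw [hRdef, Finset.mem_sdiff, Finset.mem_union] at hi
      have h0 : a i ≠ 0 := fun h => hi.2 (Or.inl (Finset.mem_filter.mpr ⟨Finset.mem_univ i, h⟩))
      have h1 : a i ≠ 1 := fun h => hi.2 (Or.inr (Finset.mem_filter.mpr ⟨Finset.mem_univ i, h⟩))
      have h2 : a i = 2 := by omega
      rw [hpre i (a i), h2]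
      exact hq i
    calc μ (S a) = ∏ i ∈ Finset.univ, μ (A i ⁻¹' {a i}) := hSa
      _ = ∏ i ∈ (T ∪ Kf) ∪ R, μ (A i ⁻¹' {a i}) := by rw [hu]
      _ = (∏ i ∈ T, μ (A i ⁻¹' {a i})) * (∏ i ∈ Kf, μ (A i ⁻¹' {a i}))
            * ∏ i ∈ R, μ (A i ⁻¹' {a i}) := by
          rw [Finset.prod_union hdR, Finset.prod_union hdTK]
      _ = w := by rw [hprodT, hprodK, hprodR, hwdef]
  -- E as a union
  have hE : E = ⋃ a ∈ C, S a := by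
    ext ω
    simp only [hEdef, Set.mem_setOf_eq, Set.mem_iUnion, exists_prop]
    constructor
    · intro h
      exact ⟨fun i => A i ω, Finset.mem_filter.mpr ⟨Finset.mem_univ _, h⟩,
        (hSmem _ ω).mpr fun i => rfl⟩
    · rintro ⟨a, haC, hωa⟩
      have hAa : ∀ i, A i ω = a i := (hSmem a ω).mp hωa
      have h0 : (Finset.univ.filter fun i => A i ω = 0) = (Finset.univ.filter fun i => a i = 0) :=
        Finset.filter_congr fun i _ => by rw [hAa i]
      have h1 : (Finset.univ.filter fun i => A i ω = 1) = (Finset.univ.filter fun i => a i = 1) :=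
        Finset.filter_congr fun i _ => by rw [hAa i]
      rw [h0, h1]
      exact (Finset.mem_filter.mp haC).2
  have hEmeas : MeasurableSet E := by
    rw [hE]
    exact Finset.measurableSet_biUnion _ fun a _ => hSmeas a
  have hμE : μ E = C.card * w := by
    rw [hE, measure_biUnion_finset hSdisj (fun a _ => hSmeas a),
      Finset.sum_congr rfl hw, Finset.sum_const, nsmul_eq_mul]
  -- the bad events
  set V : (Fin n → Fin 3) → Set (Fin n → ℝ) := fun a =>
    {v | (∑ i ∈ Finset.univ.filter (fun i => a i = 0), v i) / (nX : ℝ) + γ ≤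
      (∑ i ∈ Finset.univ.filter (fun i => a i = 1), v i) / (nK : ℝ)} with hVdef
  have hVmeas : ∀ a, MeasurableSet (V a) := by
    intro a
    apply measurableSet_le
    · exact ((Finset.measurable_sum _ fun i _ => measurable_pi_apply i).div_const _).add_const γ
    · exact (Finset.measurable_sum _ fun i _ => measurable_pi_apply i).div_const _
  set B : (Fin n → Fin 3) → Set Ω := fun a => (fun ω (i : Fin n) => X i ω) ⁻¹' V a with hBdef
  have hvXmeas : Measurable (fun ω (i : Fin n) => X i ω) :=
    measurable_pi_lambda _ fun i => hXmeas i
  have hBmeas : ∀ a, MeasurableSet (B a) := fun a => hvXmeas (hVmeas a)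
  have hBmem : ∀ a (ω : Ω), ω ∈ B a ↔
      (∑ i ∈ Finset.univ.filter (fun i => a i = 0), X i ω) / (nX : ℝ) + γ ≤
        (∑ i ∈ Finset.univ.filter (fun i => a i = 1), X i ω) / (nK : ℝ) := by
    intro a ω
    rfl
  -- independence
  have hsingmeas : ∀ a : Fin n → Fin 3, MeasurableSet ({a} : Set (Fin n → Fin 3)) := by
    intro a
    have : ({a} : Set (Fin n → Fin 3)) = ⋂ i, (fun v : Fin n → Fin 3 => v i) ⁻¹' {a i} := by
      ext v
      simp [funext_iff]
    rw [this]
    exact MeasurableSet.iInter fun i => (measurable_pi_apply i) (measurableSet_singleton (a i))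
  have hSrepr : ∀ a : Fin n → Fin 3, S a = (fun ω (i : Fin n) => A i ω) ⁻¹' {a} := by
    intro a
    ext ω
    rw [hSmem a ω]
    simp [funext_iff]
  have hSaB : ∀ a ∈ C, μ (S a ∩ B a) = w * μ (B a) := by
    intro a haC
    rw [hSrepr a, hBdef, Set.inter_comm]
    rw [hXA.measure_inter_preimage_eq_mul (V a) {a} (hVmeas a) (hsingmeas a)]
    rw [← hBdef, ← hSrepr a, hw a haC, mul_comm]
  -- E ∩ bad as a union
  have hbadE : E ∩ bad = ⋃ a ∈ C, (S a ∩ B a) := by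
    ext ω
    simp only [Set.mem_inter_iff, Set.mem_iUnion, exists_prop]
    constructor
    · rintro ⟨hωE, hωbad⟩
      refine ⟨fun i => A i ω, Finset.mem_filter.mpr ⟨Finset.mem_univ _, hωE⟩,
        (hSmem _ ω).mpr fun i => rfl, ?_⟩
      rw [hBmem]
      exact hωbad
    · rintro ⟨a, haC, hωa, hωB⟩
      have hAa : ∀ i, A i ω = a i := (hSmem a ω).mp hωa
      have h0 : (Finset.univ.filter fun i => A i ω = 0) = (Finset.univ.filter fun i => a i = 0) :=
        Finset.filter_congr fun i _ => by rw [hAa i]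
      have h1 : (Finset.univ.filter fun i => A i ω = 1) = (Finset.univ.filter fun i => a i = 1) :=
        Finset.filter_congr fun i _ => by rw [hAa i]
      constructor
      · rw [hEdef, Set.mem_setOf_eq, h0, h1]
        exact (Finset.mem_filter.mp haC).2
      · rw [hbaddef, Set.mem_setOf_eq, h0, h1]
        exact (hBmem a ω).mp hωB
  -- sum of bad event measures
  have hsumB : ∑ a ∈ C, μ (B a) ≤ C.card * ebound := by
    have hint : ∀ a ∈ C, μ (B a) = ∫⁻ ω, (B a).indicator 1 ω ∂μ :=
      fun a _ => (lintegral_indicator_one (hBmeas a)).symm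
    rw [Finset.sum_congr rfl hint, ← lintegral_finset_sum C
      (fun a _ => measurable_one.indicator (hBmeas a))]
    have hpoint : ∀ ω, ∑ a ∈ C, (B a).indicator (1 : Ω → ENNReal) ω
        ≤ C.card * ebound := by
      intro ω
      have hcast : ∑ a ∈ C, (B a).indicator (1 : Ω → ENNReal) ω
          = ((C.filter (fun a => ω ∈ B a)).card : ENNReal) := by
        rw [Finset.card_filter]
        rw [Finset.sum_congr rfl (fun a _ => Set.indicator_apply (B a) 1 ω)]
        push_cast
        exact Finset.sum_congr rfl fun a _ => by split <;> simp
      rw [hcast]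
      have hreal := count_assignments (fun i => X i ω)
        (fun i => by rcases hX01 i ω with h | h <;> simp [h])
        (fun i => by rcases hX01 i ω with h | h <;> simp [h])
        nX nK hnX hnK γ hγ
      have hCfilter : C.filter (fun a => ω ∈ B a) =
          Finset.univ.filter (fun a : Fin n → Fin 3 =>
            ((Finset.univ.filter fun i => a i = 0).card = nX ∧
             (Finset.univ.filter fun i => a i = 1).card = nK) ∧
            (∑ i ∈ Finset.univ.filter (fun i => a i = 0), X i ω) / (nX:ℝ) + γ ≤
              (∑ i ∈ Finset.univ.filter (fun i => a i = 1), X i ω) / (nK:ℝ)) := by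
        rw [hCdef, Finset.filter_filter]
        exact Finset.filter_congr fun a _ => by rw [hBmem a ω]
      rw [hCfilter]
      calc ((Finset.univ.filter (fun a : Fin n → Fin 3 =>
            ((Finset.univ.filter fun i => a i = 0).card = nX ∧
             (Finset.univ.filter fun i => a i = 1).card = nK) ∧
            (∑ i ∈ Finset.univ.filter (fun i => a i = 0), X i ω) / (nX:ℝ) + γ ≤
              (∑ i ∈ Finset.univ.filter (fun i => a i = 1), X i ω) / (nK:ℝ))).card : ENNReal)
          = ENNReal.ofReal ((Finset.univ.filter (fun a : Fin n → Fin 3 =>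
            ((Finset.univ.filter fun i => a i = 0).card = nX ∧
             (Finset.univ.filter fun i => a i = 1).card = nK) ∧
            (∑ i ∈ Finset.univ.filter (fun i => a i = 0), X i ω) / (nX:ℝ) + γ ≤
              (∑ i ∈ Finset.univ.filter (fun i => a i = 1), X i ω) / (nK:ℝ))).card : ℝ) :=
            (ENNReal.ofReal_natCast _).symm
        _ ≤ ENNReal.ofReal ((C.card : ℝ) *
              Real.exp (-2 * γ^2 * ((nK:ℝ) * (nX:ℝ)^2 / (((nK:ℝ)+(nX:ℝ)) * ((nX:ℝ)+1))))) := by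
            apply ENNReal.ofReal_le_ofReal
            exact hreal
        _ = (C.card : ENNReal) * ebound := by
            rw [ENNReal.ofReal_mul (by positivity), ENNReal.ofReal_natCast, hedef]
    calc ∫⁻ ω, ∑ a ∈ C, (B a).indicator (1 : Ω → ENNReal) ω ∂μ
        ≤ ∫⁻ _ω, (C.card : ENNReal) * ebound ∂μ := lintegral_mono hpoint
      _ = C.card * ebound := by rw [lintegral_const, measure_univ, mul_one]
  -- main bound
  have hkey : μ (E ∩ bad) ≤ μ E * ebound := by
    calc μ (E ∩ bad) = μ (⋃ a ∈ C, (S a ∩ B a)) := by rw [hbadE]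
      _ ≤ ∑ a ∈ C, μ (S a ∩ B a) := measure_biUnion_finset_le C _
      _ = ∑ a ∈ C, w * μ (B a) := Finset.sum_congr rfl hSaB
      _ = w * ∑ a ∈ C, μ (B a) := by rw [Finset.mul_sum]
      _ ≤ w * (C.card * ebound) := mul_le_mul_right hsumB w
      _ = μ E * ebound := by rw [hμE]; ring
  -- conditional probability
  rw [ProbabilityTheory.cond_apply hEmeas μ bad]
  rcases eq_or_ne (μ E) 0 with h0 | h0
  · have : μ (E ∩ bad) = 0 :=
      le_antisymm (h0 ▸ measure_mono Set.inter_subset_left) zero_le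
    rw [this, mul_zero]
    exact zero_le
  · calc (μ E)⁻¹ * μ (E ∩ bad) ≤ (μ E)⁻¹ * (μ E * ebound) := mul_le_mul_right hkey _
      _ = ebound := by
          rw [← mul_assoc, ENNReal.inv_mul_cancel h0 (measure_ne_top μ E), one_mul]
end

section
/- Let ρ be a state on Q^⊗n (n-fold tensor product of a finite-dimensional Hilbert space). Let P and P′ be operators with 0 ≤ P ≤ P′ ≤ I. Let N_P denote the random number of 'P' outcomes when each of the n subsystems of ρ is measured with the binary POVM {P, I−P}, and N_{P′} similarly for {P′, I−P′}. Then for every threshold e, Pr(N_P/n ≥ e) ≤ Pr(N_{P′}/n ≥ e). -/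
open Matrix BigOperators
open scoped ComplexOrder

/-- The product POVM element on `Q^⊗n` corresponding to outcome string `s`, where each
subsystem is measured with the binary POVM `{P, I − P}` (`s i = true` means `P`-outcome). -/
noncomputable def povmProd {d n : ℕ} (P : Matrix (Fin d) (Fin d) ℂ) (s : Fin n → Bool) :
    Matrix (Fin n → Fin d) (Fin n → Fin d) ℂ :=
  Matrix.of fun x y => ∏ i, (if s i then P else (1 : Matrix (Fin d) (Fin d) ℂ) - P) (x i) (y i)

/-- `Pr(N_P / n ≥ e)`: the probability (via Born's rule) that, measuring each of the `n`
subsystems of `ρ` with `{P, I − P}`, the number of `P`-outcomes is at least `e·n`. -/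
noncomputable def tailProb {d n : ℕ} (ρ : Matrix (Fin n → Fin d) (Fin n → Fin d) ℂ)
    (P : Matrix (Fin d) (Fin d) ℂ) (e : ℝ) : ℝ :=
  ∑ s : Fin n → Bool,
    if e * n ≤ ((Finset.univ.filter fun i => s i = true).card : ℝ)
    then ((povmProd P s * ρ).trace).re else 0

section Aux

variable {d n : ℕ}

/-- The product of a triple of matrices indexed by `f`. -/
noncomputable def prodM (M : Fin 3 → Matrix (Fin d) (Fin d) ℂ) (f : Fin n → Fin 3) :
    Matrix (Fin n → Fin d) (Fin n → Fin d) ℂ :=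
  Matrix.of fun x y => ∏ i, (M (f i)) (x i) (y i)

open scoped MatrixOrder in
lemma psd_exists_conjTranspose_mul {m : Type*} [Fintype m] [DecidableEq m]
    {A : Matrix m m ℂ} (hA : A.PosSemidef) : ∃ B : Matrix m m ℂ, A = Bᴴ * B := by
  obtain ⟨X, hX, -, hXA⟩ :=
    sub_zero A ▸ CFC.exists_sqrt_of_isSelfAdjoint_of_quasispectrumRestricts hA.isHermitian
      (QuasispectrumRestricts.nnreal_of_nonneg hA.nonneg)
  rw [sub_zero] at hXA
  refine ⟨X, ?_⟩
  rw [← hXA, ← Matrix.star_eq_conjTranspose, hX.star_eq]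

lemma prodM_posSemidef {M : Fin 3 → Matrix (Fin d) (Fin d) ℂ}
    (hM : ∀ j, (M j).PosSemidef) (f : Fin n → Fin 3) : (prodM M f).PosSemidef := by
  have hB : ∀ j, ∃ B : Matrix (Fin d) (Fin d) ℂ, M j = Bᴴ * B := fun j =>
    psd_exists_conjTranspose_mul (hM j)
  choose B hBeq using hB
  set C : Matrix (Fin n → Fin d) (Fin n → Fin d) ℂ :=
    Matrix.of fun k x => ∏ i, (B (f i)) (k i) (x i) with hC
  have : prodM M f = Cᴴ * C := by
    ext x y
    simp only [prodM, Matrix.of_apply, Matrix.mul_apply, Matrix.conjTranspose_apply, hC,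
      Matrix.of_apply]
    have : ∀ i : Fin n, (M (f i)) (x i) (y i) =
        ∑ m : Fin d, star ((B (f i)) m (x i)) * (B (f i)) m (y i) := by
      intro i
      rw [hBeq (f i)]
      simp [Matrix.mul_apply, Matrix.conjTranspose_apply]
    rw [Finset.prod_congr rfl fun i _ => this i, Finset.prod_univ_sum]
    refine Finset.sum_congr rfl fun k _ => ?_
    rw [star_prod, ← Finset.prod_mul_distrib]
  rw [this]
  exact Matrix.posSemidef_conjTranspose_mul_self C

lemma trace_nonneg_of_posSemidef {m : Type*} [Fintype m] [DecidableEq m]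
    {M : Matrix m m ℂ} (hM : M.PosSemidef) : 0 ≤ M.trace := by
  rw [Matrix.trace]
  refine Finset.sum_nonneg fun i _ => ?_
  exact hM.diag_nonneg

lemma trace_mul_re_nonneg {m : Type*} [Fintype m] [DecidableEq m]
    {A ρ : Matrix m m ℂ} (hA : A.PosSemidef) (hρ : ρ.PosSemidef) :
    0 ≤ ((A * ρ).trace).re := by
  obtain ⟨C, hC⟩ := psd_exists_conjTranspose_mul hA
  have h1 : (A * ρ).trace = (C * ρ * Cᴴ).trace := by
    rw [hC, Matrix.mul_assoc, Matrix.trace_mul_comm]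
  have h2 : (C * ρ * Cᴴ).PosSemidef := hρ.mul_mul_conjTranspose_same C
  have := trace_nonneg_of_posSemidef h2
  rw [h1]
  exact (Complex.le_def.mp this).1

/-- Expansion of a product of per-site sums over the triple `M`. -/
lemma povm_expand (M : Fin 3 → Matrix (Fin d) (Fin d) ℂ) (G : Bool → Matrix (Fin d) (Fin d) ℂ)
    (T : Bool → Finset (Fin 3)) (hG : ∀ b, G b = ∑ j ∈ T b, M j) (s : Fin n → Bool) :
    (Matrix.of fun x y => ∏ i, (G (s i)) (x i) (y i)) =
      ∑ g ∈ Fintype.piFinset (fun i => T (s i)), prodM M g := by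
  ext x y
  simp only [Matrix.sum_apply, Matrix.of_apply, prodM]
  have h1 : ∀ i : Fin n, (G (s i)) (x i) (y i) = ∑ j ∈ T (s i), (M j) (x i) (y i) := by
    intro i; rw [hG (s i)]; simp [Matrix.sum_apply]
  rw [Finset.prod_congr rfl fun i _ => h1 i]
  exact Finset.prod_univ_sum (fun i => T (s i)) (fun i j => (M j) (x i) (y i))

lemma piFinset_eq_filter (T : Bool → Finset (Fin 3)) (φ0 : Fin 3 → Bool)
    (hTb : ∀ (j : Fin 3) (b : Bool), j ∈ T b ↔ φ0 j = b) (s : Fin n → Bool) :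
    Fintype.piFinset (fun i => T (s i)) =
      Finset.univ.filter (fun g : Fin n → Fin 3 => (fun i => φ0 (g i)) = s) := by
  ext g
  simp only [Fintype.mem_piFinset, Finset.mem_filter, Finset.mem_univ, true_and, funext_iff]
  exact forall_congr' fun i => hTb (g i) (s i)

/-- Rewriting the tail probability as a sum over three-outcome strings. -/
lemma tailProb_eq_sum3 (ρ : Matrix (Fin n → Fin d) (Fin n → Fin d) ℂ)
    (Q : Matrix (Fin d) (Fin d) ℂ) (e : ℝ)
    (M : Fin 3 → Matrix (Fin d) (Fin d) ℂ) (T : Bool → Finset (Fin 3)) (φ0 : Fin 3 → Bool)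
    (hTb : ∀ (j : Fin 3) (b : Bool), j ∈ T b ↔ φ0 j = b)
    (hT : Q = ∑ j ∈ T true, M j)
    (hF : (1 : Matrix (Fin d) (Fin d) ℂ) - Q = ∑ j ∈ T false, M j) :
    tailProb ρ Q e = ∑ g : Fin n → Fin 3,
      if e * n ≤ ((Finset.univ.filter fun i => φ0 (g i) = true).card : ℝ)
      then ((prodM M g * ρ).trace).re else 0 := by
  have hG : ∀ b, (if b then Q else (1 : Matrix (Fin d) (Fin d) ℂ) - Q) = ∑ j ∈ T b, M j := by
    intro b; cases b <;> simpa
  unfold tailProb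
  have hexp : ∀ s : Fin n → Bool, povmProd Q s =
      ∑ g ∈ Finset.univ.filter (fun g : Fin n → Fin 3 => (fun i => φ0 (g i)) = s),
        prodM M g := by
    intro s
    rw [povmProd, povm_expand M _ T hG s, piFinset_eq_filter T φ0 hTb s]
  calc
    (∑ s : Fin n → Bool,
        if e * n ≤ ((Finset.univ.filter fun i => s i = true).card : ℝ)
        then ((povmProd Q s * ρ).trace).re else 0)
      = ∑ s : Fin n → Bool,
          ∑ g ∈ Finset.univ.filter (fun g : Fin n → Fin 3 => (fun i => φ0 (g i)) = s),
            (if e * n ≤ ((Finset.univ.filter fun i => φ0 (g i) = true).card : ℝ)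
             then ((prodM M g * ρ).trace).re else 0) := by
        refine Finset.sum_congr rfl fun s _ => ?_
        rw [hexp s, Finset.sum_mul, Matrix.trace_sum, Complex.re_sum]
        have key : ∀ g ∈ Finset.univ.filter
            (fun g : Fin n → Fin 3 => (fun i => φ0 (g i)) = s),
            (if e * n ≤ ((Finset.univ.filter fun i => φ0 (g i) = true).card : ℝ)
              then ((prodM M g * ρ).trace).re else 0) =
            (if e * n ≤ ((Finset.univ.filter fun i => s i = true).card : ℝ)
              then ((prodM M g * ρ).trace).re else 0) := by
          intro g hg
          have hgs : (fun i => φ0 (g i)) = s := (Finset.mem_filter.mp hg).2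
          rw [funext_iff] at hgs
          have hfe : (Finset.univ.filter fun i => φ0 (g i) = true) =
              (Finset.univ.filter fun i => s i = true) := by
            refine Finset.filter_congr fun i _ => ?_
            rw [hgs i]
          rw [hfe]
        rw [Finset.sum_congr rfl key]
        split_ifs with hc
        · rfl
        · exact Finset.sum_const_zero.symm
    _ = _ := by
        exact Finset.sum_fiberwise Finset.univ (fun g : Fin n → Fin 3 => (fun i => φ0 (g i)))
          (fun g => if e * n ≤ ((Finset.univ.filter fun i => φ0 (g i) = true).card : ℝ)
            then ((prodM M g * ρ).trace).re else 0)

end Aux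

/-- **Monotonicity of outcome counts under Loewner order.** If `0 ≤ P ≤ P′ ≤ I`, then for
every threshold `e`, `Pr(N_P/n ≥ e) ≤ Pr(N_{P′}/n ≥ e)`. -/
theorem tailProb_mono {d n : ℕ}
    (ρ : Matrix (Fin n → Fin d) (Fin n → Fin d) ℂ)
    (hρ : ρ.PosSemidef) (hρtr : ρ.trace = 1)
    (P P' : Matrix (Fin d) (Fin d) ℂ)
    (hP : P.PosSemidef) (hPP' : (P' - P).PosSemidef)
    (hP'le : ((1 : Matrix (Fin d) (Fin d) ℂ) - P').PosSemidef)
    (e : ℝ) :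
    tailProb ρ P e ≤ tailProb ρ P' e := by
  classical
  set M : Fin 3 → Matrix (Fin d) (Fin d) ℂ := ![P, P' - P, 1 - P'] with hMdef
  have hM : ∀ j, (M j).PosSemidef := by
    intro j
    fin_cases j
    · exact hP
    · exact hPP'
    · exact hP'le
  -- two decompositions
  have h1 : tailProb ρ P e = ∑ g : Fin n → Fin 3,
      if e * n ≤ ((Finset.univ.filter fun i => (decide (g i = 0) : Bool) = true).card : ℝ)
      then ((prodM M g * ρ).trace).re else 0 := by
    refine tailProb_eq_sum3 ρ P e M (fun b => if b then {0} else {1, 2})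
      (fun j => decide (j = 0)) (by decide) ?_ ?_
    · simp [hMdef]
    · show (1 : Matrix (Fin d) (Fin d) ℂ) - P = ∑ j ∈ ({1, 2} : Finset (Fin 3)), M j
      rw [Finset.sum_insert (by decide), Finset.sum_singleton]
      show (1 : Matrix (Fin d) (Fin d) ℂ) - P = (P' - P) + (1 - P')
      abel
  have h2 : tailProb ρ P' e = ∑ g : Fin n → Fin 3,
      if e * n ≤ ((Finset.univ.filter fun i => (decide (g i ≠ 2) : Bool) = true).card : ℝ)
      then ((prodM M g * ρ).trace).re else 0 := by
    refine tailProb_eq_sum3 ρ P' e M (fun b => if b then {0, 1} else {2})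
      (fun j => decide (j ≠ 2)) (by decide) ?_ ?_
    · show P' = ∑ j ∈ ({0, 1} : Finset (Fin 3)), M j
      rw [Finset.sum_insert (by decide), Finset.sum_singleton]
      show P' = P + (P' - P)
      abel
    · simp [hMdef]
  rw [h1, h2]
  refine Finset.sum_le_sum fun g _ => ?_
  have hw : 0 ≤ ((prodM M g * ρ).trace).re :=
    trace_mul_re_nonneg (prodM_posSemidef hM g) hρ
  have hcard : ((Finset.univ.filter fun i => (decide (g i = 0) : Bool) = true).card : ℝ) ≤
      ((Finset.univ.filter fun i => (decide (g i ≠ 2) : Bool) = true).card : ℝ) := by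
    have hsub : (Finset.univ.filter fun i => (decide (g i = 0) : Bool) = true) ⊆
        (Finset.univ.filter fun i => (decide (g i ≠ 2) : Bool) = true) := by
      refine Finset.monotone_filter_right _ ?_
      intro i _
      simp only [le_Prop_eq, decide_eq_true_eq]
      intro h
      rw [h]
      decide
    exact_mod_cast Finset.card_le_card hsub
  split_ifs with hc1 hc2
  · exact le_refl _
  · exact absurd (le_trans hc1 hcard) hc2
  · exact hw
  · exact le_refl _
end

section
/- Let ρ be a state on Q^⊗n and let P satisfy 0 ≤ P ≤ I with operator norm ‖P‖_∞ ≤ δ. Let N_P be the number of P-outcomes when each subsystem is measured with {P, I−P}. Then for every c ≥ 0, Pr(N_P/n ≥ δ + c) ≤ ξ(n, δ, c), where ξ(n,δ,c) := Σ_{i = ⌈n(δ+c)⌉}^{n} C(n,i) δ^i (1−δ)^{n−i} is the upper tail of the Binomial(n, δ) distribution. -/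
open Matrix BigOperators
open scoped ComplexOrder

/-- The operator norm `‖·‖_∞` of a matrix, i.e. the norm of the induced linear operator
on Euclidean space. -/
noncomputable def matOpNorm {d : ℕ} (P : Matrix (Fin d) (Fin d) ℂ) : ℝ :=
  ‖LinearMap.toContinuousLinearMap (Matrix.toEuclideanLin P)‖

/-- Upper tail `ξ(n, δ, c)` of the Binomial(n, δ) distribution, summed from `⌈n(δ+c)⌉` to `n`. -/
noncomputable def binTail (n : ℕ) (δ c : ℝ) : ℝ :=
  ∑ i ∈ (Finset.range (n + 1)).filter (fun i : ℕ => (n : ℝ) * (δ + c) ≤ (i : ℝ)),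
    (n.choose i : ℝ) * δ ^ i * (1 - δ) ^ (n - i)

namespace SmallPovm

variable {d n : ℕ}

/-- Elementwise ("Kronecker") tensor product of `n` matrices of size `d`. -/
noncomputable def piT (A : Fin n → Matrix (Fin d) (Fin d) ℂ) :
    Matrix (Fin n → Fin d) (Fin n → Fin d) ℂ :=
  Matrix.of fun x y => ∏ i, A i (x i) (y i)

lemma piT_apply (A : Fin n → Matrix (Fin d) (Fin d) ℂ) (x y : Fin n → Fin d) :
    piT A x y = ∏ i, A i (x i) (y i) := rfl

lemma piT_mul (A B : Fin n → Matrix (Fin d) (Fin d) ℂ) :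
    piT A * piT B = piT (fun i => A i * B i) := by
  ext x y
  simp only [Matrix.mul_apply, piT_apply]
  rw [Fintype.prod_sum fun i j => A i (x i) j * B i j (y i)]
  exact Finset.sum_congr rfl fun z _ => (Finset.prod_mul_distrib).symm

lemma piT_conjTranspose (A : Fin n → Matrix (Fin d) (Fin d) ℂ) :
    (piT A)ᴴ = piT (fun i => (A i)ᴴ) := by
  ext x y
  simp [piT_apply, Matrix.conjTranspose_apply, map_prod]

open scoped MatrixOrder in
lemma psd_exists_ct_mul {m : Type*} [Fintype m] [DecidableEq m] {A : Matrix m m ℂ}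
    (h : A.PosSemidef) : ∃ B : Matrix m m ℂ, A = Bᴴ * B :=
  CStarAlgebra.nonneg_iff_eq_star_mul_self.mp h.nonneg

lemma piT_posSemidef {A : Fin n → Matrix (Fin d) (Fin d) ℂ}
    (h : ∀ i, (A i).PosSemidef) : (piT A).PosSemidef := by
  choose B hB using fun i => psd_exists_ct_mul (h i)
  suffices hh : piT A = (piT B)ᴴ * piT B from hh ▸ Matrix.posSemidef_conjTranspose_mul_self _
  rw [piT_conjTranspose, piT_mul]
  exact congrArg piT (funext fun i => hB i)

/-- The trace of a product of two PSD matrices has nonnegative real part. -/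
lemma trace_mul_re_nonneg {m : Type*} [Fintype m] [DecidableEq m]
    {A ρ : Matrix m m ℂ} (hA : A.PosSemidef) (hρ : ρ.PosSemidef) :
    0 ≤ ((A * ρ).trace).re := by
  obtain ⟨B, rfl⟩ := psd_exists_ct_mul hA
  rw [Matrix.mul_assoc, Matrix.trace_mul_comm]
  have h2 : (B * ρ * Bᴴ).PosSemidef := hρ.mul_mul_conjTranspose_same B
  have h3 : 0 ≤ (B * ρ * Bᴴ).trace := by
    rw [Matrix.trace]
    apply Finset.sum_nonneg
    intro i _
    have := h2.dotProduct_mulVec_nonneg (Pi.single i 1)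
    simpa [dotProduct, Matrix.mulVec, Pi.single_apply, Matrix.diag] using this
  exact (Complex.le_def.mp h3).1

/-- `δ•1 − P` is PSD when `P` is PSD with operator norm at most `δ`. -/
lemma smul_one_sub_posSemidef {P : Matrix (Fin d) (Fin d) ℂ} (hP : P.PosSemidef)
    {δ : ℝ} (hδ : ‖LinearMap.toContinuousLinearMap (Matrix.toEuclideanLin P)‖ ≤ δ) :
    ((δ : ℂ) • (1 : Matrix (Fin d) (Fin d) ℂ) - P).PosSemidef := by
  refine Matrix.PosSemidef.of_dotProduct_mulVec_nonneg ?_ ?_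
  · have : ((δ : ℂ) • (1 : Matrix (Fin d) (Fin d) ℂ)).IsHermitian := by
      simp [Matrix.IsHermitian, Matrix.conjTranspose_smul, Complex.star_def, Complex.conj_ofReal]
    exact this.sub hP.1
  · intro x
    have hq := hP.dotProduct_mulVec_nonneg x
    set q : ℂ := dotProduct (star x) (P *ᵥ x) with hqdef
    have hsx : dotProduct (star x) x
        = Complex.ofReal (‖(WithLp.equiv 2 (Fin d → ℂ)).symm x‖ ^ 2) := by
      rw [show star x ⬝ᵥ x = inner ℂ ((WithLp.equiv 2 (Fin d → ℂ)).symm x)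
        ((WithLp.equiv 2 (Fin d → ℂ)).symm x) from dotProduct_comm _ _, inner_self_eq_norm_sq_to_K]
      norm_cast
    have hqbound : q.re ≤ δ * ‖(WithLp.equiv 2 (Fin d → ℂ)).symm x‖ ^ 2 := by
      set x' : EuclideanSpace ℂ (Fin d) := (WithLp.equiv 2 (Fin d → ℂ)).symm x
      have hq2 : q = inner ℂ x' (Matrix.toEuclideanLin P x') := by
        rw [hqdef]
        exact dotProduct_comm _ _
      calc q.re ≤ ‖q‖ := Complex.re_le_norm q
        _ = ‖inner ℂ x' (Matrix.toEuclideanLin P x')‖ := by rw [hq2]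
        _ ≤ ‖x'‖ * ‖Matrix.toEuclideanLin P x'‖ := norm_inner_le_norm _ _
        _ = ‖x'‖ * ‖(LinearMap.toContinuousLinearMap (Matrix.toEuclideanLin P)) x'‖ := rfl
        _ ≤ ‖x'‖ * (‖LinearMap.toContinuousLinearMap (Matrix.toEuclideanLin P)‖ * ‖x'‖) := by
            gcongr; exact (LinearMap.toContinuousLinearMap (Matrix.toEuclideanLin P)).le_opNorm x'
        _ ≤ ‖x'‖ * (δ * ‖x'‖) := by gcongr
        _ = δ * ‖x'‖ ^ 2 := by ring
    have hcomp : dotProduct (star x) (((δ : ℂ) • (1 : Matrix (Fin d) (Fin d) ℂ) - P) *ᵥ x)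
        = (δ : ℂ) * dotProduct (star x) x - q := by
      rw [Matrix.sub_mulVec, dotProduct_sub, Matrix.smul_mulVec,
        Matrix.one_mulVec, dotProduct_smul]
      simp [hqdef, smul_eq_mul]
    have him : q.im = 0 := ((Complex.le_def.mp hq).2).symm
    rw [hcomp, hsx, ← Complex.ofReal_mul, Complex.le_def]
    constructor
    · simp only [Complex.sub_re, Complex.zero_re, Complex.ofReal_re]
      linarith [hqbound]
    · simp only [Complex.sub_im, Complex.mul_im, him, Complex.zero_im]
      rw [Complex.ofReal_im, sub_zero]

/-- A real nonnegative multiple of the identity is PSD. -/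
lemma posSemidef_real_smul_one {δ : ℝ} (h : 0 ≤ δ) :
    ((δ : ℂ) • (1 : Matrix (Fin d) (Fin d) ℂ)).PosSemidef := by
  refine Matrix.PosSemidef.of_dotProduct_mulVec_nonneg ?_ ?_
  · simp [Matrix.IsHermitian, Matrix.conjTranspose_smul, Complex.star_def, Complex.conj_ofReal]
  · intro x
    have h1 := (Matrix.PosSemidef.one (n := Fin d) (R := ℂ)).dotProduct_mulVec_nonneg x
    rw [Matrix.smul_mulVec, dotProduct_smul, smul_eq_mul]
    exact mul_nonneg (by exact_mod_cast Complex.zero_le_real.mpr h) h1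

/-- `piT` is additive in a single slot. -/
lemma piT_add_single (X Y : Fin n → Matrix (Fin d) (Fin d) ℂ) (j : Fin n)
    (h : ∀ i, i ≠ j → X i = Y i) :
    piT X + piT Y = piT (Function.update X j (X j + Y j)) := by
  ext x y
  have hX : ∏ i, X i (x i) (y i)
      = X j (x j) (y j) * ∏ i ∈ Finset.univ.erase j, X i (x i) (y i) :=
    (Finset.mul_prod_erase Finset.univ _ (Finset.mem_univ j)).symm
  have hY : ∏ i, Y i (x i) (y i)
      = Y j (x j) (y j) * ∏ i ∈ Finset.univ.erase j, X i (x i) (y i) := by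
    rw [← Finset.mul_prod_erase Finset.univ _ (Finset.mem_univ j)]
    congr 1
    exact Finset.prod_congr rfl fun i hi => by
      rw [h i (Finset.mem_erase.mp hi).1]
  have hZ : ∏ i, (Function.update X j (X j + Y j)) i (x i) (y i)
      = (X j (x j) (y j) + Y j (x j) (y j)) * ∏ i ∈ Finset.univ.erase j, X i (x i) (y i) := by
    rw [← Finset.mul_prod_erase Finset.univ _ (Finset.mem_univ j)]
    rw [Function.update_self, Matrix.add_apply]
    congr 1
    exact Finset.prod_congr rfl fun i hi =>
      by rw [Function.update_of_ne (Finset.mem_erase.mp hi).1]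
  simp only [Matrix.add_apply, piT_apply, hX, hY, hZ, add_mul]

/-- `piT` of scalar multiples of the identity. -/
lemma piT_smul_one (c : Fin n → ℂ) :
    piT (fun i => c i • (1 : Matrix (Fin d) (Fin d) ℂ)) = (∏ i, c i) • 1 := by
  ext x y
  simp only [piT_apply, Matrix.smul_apply, Matrix.one_apply, smul_eq_mul]
  rw [Finset.prod_mul_distrib, Finset.prod_boole]
  congr 1
  simp [funext_iff]

lemma cnt_update {s : Fin n → Bool} {j : Fin n} (hs : s j = false) :
    (Finset.univ.filter fun i => Function.update s j true i = true).card
      = (Finset.univ.filter fun i => s i = true).card + 1 := by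
  have h1 : (Finset.univ.filter fun i => Function.update s j true i = true)
      = insert j (Finset.univ.filter fun i => s i = true) := by
    ext i
    by_cases hi : i = j
    · subst hi; simp [Function.update_self]
    · simp [Function.update_of_ne hi, hi]
  rw [h1, Finset.card_insert_of_notMem (by simp [hs])]

/-- Summing a function of the number of `true`s over all boolean strings. -/
lemma sum_count (g : ℕ → ℝ) :
    ∑ s : Fin n → Bool, g ((Finset.univ.filter fun i => s i = true).card)
      = ∑ j ∈ Finset.range (n + 1), (n.choose j) • g j := by
  have hbij : Function.Bijective
      (fun s : Fin n → Bool => Finset.univ.filter fun i => s i = true) := by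
    constructor
    · intro s t hst
      funext i
      have : i ∈ Finset.univ.filter (fun i => s i = true)
          ↔ i ∈ Finset.univ.filter (fun i => t i = true) := by
        simp only [Finset.ext_iff] at hst; exact hst i
      simp only [Finset.mem_filter, Finset.mem_univ, true_and] at this
      cases hsi : s i <;> cases hti : t i <;> simp_all
    · intro A
      refine ⟨fun i => decide (i ∈ A), ?_⟩
      ext i; simp
  have h1 : ∑ s : Fin n → Bool, g ((Finset.univ.filter fun i => s i = true).card)
      = ∑ A : Finset (Fin n), g A.card :=
    Fintype.sum_bijective _ hbij _ _ fun s => rfl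
  rw [h1, ← Finset.powerset_univ, Finset.sum_powerset]
  have h2 : ∀ j, ∑ A ∈ Finset.powersetCard j (Finset.univ : Finset (Fin n)), g A.card
      = (n.choose j) • g j := by
    intro j
    have := Finset.sum_powersetCard j (Finset.univ : Finset (Fin n)) g
    simpa using this
  rw [Finset.card_univ, Fintype.card_fin]
  exact Finset.sum_congr rfl fun j _ => h2 j

/-! ### The telescoping argument -/

variable (P : Matrix (Fin d) (Fin d) ℂ) (δ : ℝ)

/-- Slot functions interpolating between the POVM `{P, 1−P}` (slots `≥ j`) and the classical
measurement `{δ•1, (1−δ)•1}` (slots `< j`). -/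
noncomputable def slotF (j : ℕ) (s : Fin n → Bool) : Fin n → Matrix (Fin d) (Fin d) ℂ :=
  fun i => if (i : ℕ) < j
    then (if s i then (δ : ℂ) • 1 else ((1 - δ : ℝ) : ℂ) • 1)
    else (if s i then P else 1 - P)

noncomputable def G (ρ : Matrix (Fin n → Fin d) (Fin n → Fin d) ℂ) (m : ℝ) (j : ℕ) : ℝ :=
  ∑ s : Fin n → Bool,
    if m ≤ ((Finset.univ.filter fun i => s i = true).card : ℝ)
    then ((piT (slotF P δ j s) * ρ).trace).re else 0

variable {P δ}

lemma G_step {ρ : Matrix (Fin n → Fin d) (Fin n → Fin d) ℂ} (hρ : ρ.PosSemidef)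
    (hP : P.PosSemidef) (hPle : ((1 : Matrix (Fin d) (Fin d) ℂ) - P).PosSemidef)
    (hPδ : ((δ : ℂ) • (1 : Matrix (Fin d) (Fin d) ℂ) - P).PosSemidef)
    (hδ0 : 0 ≤ δ) (hδ1 : δ ≤ 1) (m : ℝ) (j : ℕ) :
    G P δ ρ m j ≤ G P δ ρ m (j + 1) := by
  by_cases hjn : n ≤ j
  · have hs : slotF (n := n) P δ j = slotF P δ (j + 1) := by
      funext s i
      have h1 : (i : ℕ) < j := lt_of_lt_of_le i.isLt hjn
      simp [slotF, h1, lt_of_lt_of_le h1 (Nat.le_succ j)]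
    rw [G, G, hs]
  push_neg at hjn
  set jj : Fin n := ⟨j, hjn⟩ with hjj
  -- the PSD "difference" matrix
  have hEslots : ∀ s : Fin n → Bool, ∀ i : Fin n,
      ((Function.update (slotF P δ j s) jj ((δ : ℂ) • 1 - P)) i).PosSemidef := by
    intro s i
    by_cases hi : i = jj
    · subst hi; rw [Function.update_self]; exact hPδ
    · rw [Function.update_of_ne hi, slotF]
      split_ifs
      · exact posSemidef_real_smul_one hδ0
      · exact posSemidef_real_smul_one (by linarith)
      · exact hP
      · exact hPle
  -- key pairing lemma
  have key : ∀ F F' : (Fin n → Bool) → ℝ,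
      (∀ s, s jj = false → F s + F (Function.update s jj true)
        ≤ F' s + F' (Function.update s jj true)) →
      ∑ s, F s ≤ ∑ s, F' s := by
    intro F F' hpair
    have hsplit : ∀ F₀ : (Fin n → Bool) → ℝ, ∑ s, F₀ s
        = ∑ s ∈ Finset.univ.filter (fun s : Fin n → Bool => s jj = false),
            (F₀ s + F₀ (Function.update s jj true)) := by
      intro F₀
      rw [← Finset.sum_filter_add_sum_filter_not Finset.univ
        (fun s : Fin n → Bool => s jj = false) F₀, Finset.sum_add_distrib]
      congr 1
      refine Finset.sum_nbij' (fun s => Function.update s jj false)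
        (fun s => Function.update s jj true) ?_ ?_ ?_ ?_ ?_
      · intro s hs
        simp [Function.update_self]
      · intro s hs
        simp [Function.update_self]
      · intro s hs
        simp only [Finset.mem_filter, Finset.mem_univ, true_and, Bool.not_eq_false] at hs
        show Function.update (Function.update s jj false) jj true = s
        rw [Function.update_idem, ← hs, Function.update_eq_self]
      · intro s hs
        simp only [Finset.mem_filter, Finset.mem_univ, true_and] at hs
        show Function.update (Function.update s jj true) jj false = s
        rw [Function.update_idem, ← hs, Function.update_eq_self]
      · intro s hs
        simp only [Finset.mem_filter, Finset.mem_univ, true_and, Bool.not_eq_false] at hs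
        show F₀ s = F₀ (Function.update (Function.update s jj false) jj true)
        rw [Function.update_idem, ← hs, Function.update_eq_self]
    rw [hsplit F, hsplit F']
    refine Finset.sum_le_sum ?_
    intro s hs
    exact hpair s (by simpa using hs)
  refine key _ _ ?_
  intro s hs
  set s' := Function.update s jj true with hs'def
  set k := (Finset.univ.filter fun i => s i = true).card with hk
  have hk' : ((Finset.univ.filter fun i => s' i = true).card : ℕ) = k + 1 := cnt_update hs
  set E := piT (Function.update (slotF P δ j s) jj ((δ : ℂ) • 1 - P)) with hE
  have hEpsd : E.PosSemidef := piT_posSemidef (hEslots s)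
  have htrE : 0 ≤ ((E * ρ).trace).re := trace_mul_re_nonneg hEpsd hρ
  -- slot agreement away from jj
  have hoff : ∀ i : Fin n, i ≠ jj →
      slotF P δ j s i = slotF P δ j s' i ∧ slotF P δ (j+1) s i = slotF P δ j s i ∧
      slotF P δ (j+1) s' i = slotF P δ j s' i := by
    intro i hi
    have hsi : s' i = s i := Function.update_of_ne hi _ _
    have hlt : ((i : ℕ) < j + 1) ↔ ((i : ℕ) < j) := by
      constructor
      · intro h
        rcases Nat.lt_succ_iff_lt_or_eq.mp h with h | h
        · exact h
        · exact absurd (Fin.ext h : i = jj) hi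
      · exact fun h => Nat.lt_succ_of_lt h
    constructor
    · rw [slotF, slotF, hsi]
    constructor
    · rw [slotF, slotF]
      by_cases hij : (i : ℕ) < j
      · rw [if_pos hij, if_pos (hlt.mpr hij)]
      · rw [if_neg hij, if_neg (fun hcon => hij (hlt.mp hcon))]
    · rw [slotF, slotF]
      by_cases hij : (i : ℕ) < j
      · rw [if_pos hij, if_pos (hlt.mpr hij)]
      · rw [if_neg hij, if_neg (fun hcon => hij (hlt.mp hcon))]
  have hjjlt : ¬ ((jj : ℕ) < j) := by simp [hjj]
  have hjjlt' : ((jj : ℕ) < j + 1) := by simp [hjj]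
  -- A = B + E   where A = piT (slotF j s), B = piT (slotF (j+1) s)
  have hs'jj : s' jj = true := by rw [hs'def]; exact Function.update_self _ _ _
  have hAB : piT (slotF P δ j s) = piT (slotF P δ (j+1) s) + E := by
    rw [hE, piT_add_single _ _ jj]
    · refine congrArg piT ?_
      funext i
      by_cases hi : i = jj
      · subst hi
        have h1 : slotF P δ j s jj = 1 - P := by simp [slotF, hjjlt, hs]
        have h2 : slotF P δ (j+1) s jj = ((1 - δ : ℝ) : ℂ) • 1 := by
          simp [slotF, hjjlt', hs]
        rw [Function.update_self, Function.update_self, h1, h2,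
          Complex.ofReal_sub, Complex.ofReal_one, sub_smul, one_smul]
        abel
      · rw [Function.update_of_ne hi]
        exact ((hoff i hi).2.1).symm
    · intro i hi
      rw [Function.update_of_ne hi]
      exact (hoff i hi).2.1
  -- B' = A' + E  where A' = piT (slotF j s'), B' = piT (slotF (j+1) s')
  have hAB' : piT (slotF P δ (j+1) s') = piT (slotF P δ j s') + E := by
    rw [hE, piT_add_single _ _ jj]
    · refine congrArg piT ?_
      funext i
      by_cases hi : i = jj
      · subst hi
        have h1 : slotF P δ (j+1) s' jj = (δ : ℂ) • 1 := by simp [slotF, hjjlt', hs'jj]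
        have h2 : slotF P δ j s' jj = P := by simp [slotF, hjjlt, hs'jj]
        rw [Function.update_self, Function.update_self, h1, h2]
        abel
      · rw [Function.update_of_ne hi]
        exact (hoff i hi).2.2
    · intro i hi
      rw [Function.update_of_ne hi]
      exact ((hoff i hi).1).symm
  -- trace identities
  have htr1 : ((piT (slotF P δ j s) * ρ).trace).re
      = ((piT (slotF P δ (j+1) s) * ρ).trace).re + ((E * ρ).trace).re := by
    rw [hAB, Matrix.add_mul, Matrix.trace_add, Complex.add_re]
  have htr2 : ((piT (slotF P δ (j+1) s') * ρ).trace).re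
      = ((piT (slotF P δ j s') * ρ).trace).re + ((E * ρ).trace).re := by
    rw [hAB', Matrix.add_mul, Matrix.trace_add, Complex.add_re]
  -- conclude
  simp only [hk', ← hk]
  by_cases h1 : m ≤ (k : ℝ)
  · have h2 : m ≤ ((k : ℝ) + 1) := by linarith
    rw [if_pos h1, if_pos h1, if_pos (by exact_mod_cast (by push_cast; linarith : m ≤ ((k+1 : ℕ) : ℝ))),
      if_pos (by exact_mod_cast (by push_cast; linarith : m ≤ ((k+1 : ℕ) : ℝ)))]
    rw [htr1, htr2]
    ring_nf
    linarith
  · by_cases h2 : m ≤ (((k + 1 : ℕ)) : ℝ)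
    · rw [if_neg h1, if_neg h1, if_pos h2, if_pos h2, htr2]
      linarith
    · rw [if_neg h1, if_neg h1, if_neg h2, if_neg h2]

end SmallPovm

/-- **Small POVM measurement.** If `0 ≤ P ≤ I` with `‖P‖_∞ ≤ δ`, then for every `c ≥ 0`,
`Pr(N_P/n ≥ δ + c) ≤ ξ(n, δ, c)`. -/
theorem tailProb_small_povm {d n : ℕ}
    (ρ : Matrix (Fin n → Fin d) (Fin n → Fin d) ℂ)
    (hρ : ρ.PosSemidef) (hρtr : ρ.trace = 1)
    (P : Matrix (Fin d) (Fin d) ℂ)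
    (hP : P.PosSemidef) (hPle : ((1 : Matrix (Fin d) (Fin d) ℂ) - P).PosSemidef)
    (δ : ℝ) (hδ : matOpNorm P ≤ δ)
    (c : ℝ) (hc : 0 ≤ c) :
    tailProb ρ P (δ + c) ≤ binTail n δ c := by
  have hδ0 : 0 ≤ δ := le_trans (norm_nonneg _) hδ
  rcases Nat.eq_zero_or_pos n with hn | hn
  · -- `n = 0`: both sides are `1`.
    subst hn
    have h1 : tailProb ρ P (δ + c) = 1 := by
      rw [tailProb, Fintype.sum_unique]
      have hpov : ∀ s : Fin 0 → Bool, povmProd P s = 1 := by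
        intro s
        ext x y
        have hxy : x = y := Subsingleton.elim x y
        subst hxy
        simp [povmProd, Matrix.one_apply_eq]
      split_ifs with hcd
      · rw [hpov _, one_mul, hρtr, Complex.one_re]
      · simp at hcd
    have h2 : binTail 0 δ c = 1 := by
      rw [binTail]
      norm_num
    rw [h1, h2]
  by_cases hδ1 : δ ≤ 1
  · -- main case: telescoping from the POVM to the classical binomial measurement
    have hPδ := SmallPovm.smul_one_sub_posSemidef hP hδ
    set m : ℝ := (δ + c) * n with hm
    have hmono : ∀ j, SmallPovm.G P δ ρ m 0 ≤ SmallPovm.G P δ ρ m j := by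
      intro j
      induction j with
      | zero => exact le_refl _
      | succ j ih =>
          exact le_trans ih (SmallPovm.G_step hρ hP hPle hPδ hδ0 hδ1 m j)
    have h0 : tailProb ρ P (δ + c) = SmallPovm.G P δ ρ m 0 := by
      rw [tailProb, SmallPovm.G]
      refine Finset.sum_congr rfl fun s _ => ?_
      have hsl : SmallPovm.slotF (n := n) P δ 0 s
          = fun i => if s i then P else 1 - P :=
        funext fun i => if_neg (Nat.not_lt_zero _)
      rw [hsl]
      rfl
    have hend : SmallPovm.G P δ ρ m n = binTail n δ c := by
      have hterm : ∀ s : Fin n → Bool,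
          (if m ≤ ((Finset.univ.filter fun i => s i = true).card : ℝ)
            then ((SmallPovm.piT (SmallPovm.slotF P δ n s) * ρ).trace).re else 0)
          = (fun k : ℕ => if m ≤ (k : ℝ)
              then δ ^ k * (1 - δ) ^ (n - k) else 0)
            ((Finset.univ.filter fun i => s i = true).card) := by
        intro s
        set k := (Finset.univ.filter fun i => s i = true).card with hk
        simp only []
        by_cases hcond : m ≤ (k : ℝ)
        · rw [if_pos hcond, if_pos hcond]
          have hsl : SmallPovm.slotF P δ n s
              = fun i => (if s i then ((δ : ℝ) : ℂ) else ((1 - δ : ℝ) : ℂ)) • 1 := by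
            funext i
            rw [SmallPovm.slotF, if_pos i.isLt]
            by_cases hsi : s i <;> simp [hsi]
          rw [hsl, SmallPovm.piT_smul_one, Matrix.smul_mul, one_mul, Matrix.trace_smul]
          have hprod : (∏ i, (if s i then ((δ : ℝ) : ℂ) else ((1 - δ : ℝ) : ℂ)))
              = (((∏ i, (if s i then δ else (1 - δ) : ℝ)) : ℝ) : ℂ) := by
            rw [Complex.ofReal_prod]
            exact Finset.prod_congr rfl fun i _ => by by_cases hsi : s i <;> simp [hsi]
          rw [hprod, hρtr, smul_eq_mul, mul_one, Complex.ofReal_re]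
          rw [Finset.prod_ite, Finset.prod_const, Finset.prod_const]
          have hcc : (Finset.univ.filter fun x => ¬ s x = true).card = n - k := by
            have := Finset.card_filter_add_card_filter_not
              (s := (Finset.univ : Finset (Fin n))) (p := fun i => s i = true)
            rw [Finset.card_univ, Fintype.card_fin] at this
            omega
          rw [hcc, ← hk]
        · rw [if_neg hcond, if_neg hcond]
      have e1 : SmallPovm.G P δ ρ m n
          = ∑ s : Fin n → Bool,
            (fun k : ℕ => if m ≤ (k : ℝ) then δ ^ k * (1 - δ) ^ (n - k) else 0)
              ((Finset.univ.filter fun i => s i = true).card) := by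
        rw [SmallPovm.G]
        exact Finset.sum_congr rfl fun s _ => hterm s
      rw [e1, SmallPovm.sum_count
        (fun k : ℕ => if m ≤ (k : ℝ) then δ ^ k * (1 - δ) ^ (n - k) else 0)]
      rw [binTail, Finset.sum_filter]
      refine Finset.sum_congr rfl fun j _ => ?_
      have hmc : m ≤ (j : ℝ) ↔ (n : ℝ) * (δ + c) ≤ (j : ℝ) := by
        rw [hm, mul_comm]
      by_cases hcond : m ≤ (j : ℝ)
      · rw [if_pos hcond, if_pos (hmc.mp hcond), nsmul_eq_mul]
        ring
      · rw [if_neg hcond, if_neg (fun h => hcond (hmc.mpr h)), smul_zero]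
    calc tailProb ρ P (δ + c) = SmallPovm.G P δ ρ m 0 := h0
      _ ≤ SmallPovm.G P δ ρ m n := hmono n
      _ = binTail n δ c := hend
  · -- degenerate case `δ > 1` (with `n ≥ 1`): both sides vanish
    push_neg at hδ1
    have hgt : (1 : ℝ) < δ + c := by linarith
    have h1 : tailProb ρ P (δ + c) = 0 := by
      rw [tailProb]
      refine Finset.sum_eq_zero fun s _ => ?_
      rw [if_neg]
      intro hcon
      have hcard : ((Finset.univ.filter fun i => s i = true).card : ℝ) ≤ n := by
        have := Finset.card_filter_le (Finset.univ : Finset (Fin n)) (fun i => s i = true)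
        rw [Finset.card_univ, Fintype.card_fin] at this
        exact_mod_cast this
      have hnpos : (0 : ℝ) < n := by exact_mod_cast hn
      nlinarith
    have h2 : binTail n δ c = 0 := by
      rw [binTail]
      refine Finset.sum_eq_zero fun i hi => ?_
      rw [Finset.mem_filter, Finset.mem_range] at hi
      exfalso
      have hile : (i : ℝ) ≤ n := by exact_mod_cast Nat.lt_succ_iff.mp hi.1
      have hnpos : (0 : ℝ) < n := by exact_mod_cast hn
      nlinarith [hi.2]
    rw [h1, h2]
end

section
/- Let ρ be a (sub-normalized) classical-quantum state on registers X ⊗ Y where X and Y each hold n-bit strings, and let e_XY denote the fraction of positions i with X_i ≠ Y_i. Suppose there exists an event Ω containing {e_XY > e_max} with Pr(Ω)_ρ ≤ κ, where 0 ≤ e_max < 1/2. Then the smooth max-entropy satisfies H_max^{√κ}(X|Y)_ρ ≤ n·h(e_max), where h is the binary entropy function. -/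
open BigOperators

/-- `n`-bit strings. -/
abbrev Str (n : ℕ) := Fin n → Bool

/-- Fraction of positions where the two strings disagree. -/
noncomputable def errFrac {n : ℕ} (x y : Str n) : ℝ :=
  ((Finset.univ.filter fun i => x i ≠ y i).card : ℝ) / n

/-- Total mass (trace) of a classical sub-normalized state on `X ⊗ Y`. -/
noncomputable def mass {n : ℕ} (p : Str n → Str n → ℝ) : ℝ := ∑ x, ∑ y, p x y

/-- A sub-normalized classical (cq) state: pointwise nonnegative with total mass at most 1. -/
def IsSubState {n : ℕ} (p : Str n → Str n → ℝ) : Prop :=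
  (∀ x y, 0 ≤ p x y) ∧ mass p ≤ 1

/-- (Conditional) max-entropy `H_max(X|Y)` of a classical sub-normalized state:
`H_max(X|Y) = log₂ Σ_y (Σ_x √p(x,y))²`. -/
noncomputable def Hmax {n : ℕ} (p : Str n → Str n → ℝ) : ℝ :=
  Real.logb 2 (∑ y, (∑ x, Real.sqrt (p x y)) ^ 2)

/-- Generalized fidelity between sub-normalized classical states. -/
noncomputable def genFid {n : ℕ} (p q : Str n → Str n → ℝ) : ℝ :=
  (∑ x, ∑ y, Real.sqrt (p x y * q x y)) + Real.sqrt ((1 - mass p) * (1 - mass q))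

/-- Purified distance between sub-normalized classical states. -/
noncomputable def purDist {n : ℕ} (p q : Str n → Str n → ℝ) : ℝ :=
  Real.sqrt (1 - genFid p q ^ 2)

/-- Smooth max-entropy `H_max^ε(X|Y)`: the infimum of `H_max` over sub-normalized states
within purified distance `ε` of `p`. -/
noncomputable def smoothHmax {n : ℕ} (ε : ℝ) (p : Str n → Str n → ℝ) : ℝ :=
  sInf {h : ℝ | ∃ q : Str n → Str n → ℝ, IsSubState q ∧ purDist p q ≤ ε ∧ h = Hmax q}

/-- Binary entropy (base 2), with the convention `h(0) = 0`. -/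
noncomputable def binEnt2 (e : ℝ) : ℝ :=
  -(e * Real.logb 2 e) - (1 - e) * Real.logb 2 (1 - e)

lemma binEnt2_nonneg {e : ℝ} (h0 : 0 ≤ e) (h1 : e ≤ 1) : 0 ≤ binEnt2 e := by
  have l1 : Real.logb 2 e ≤ 0 := Real.logb_nonpos one_lt_two h0 h1
  have l2 : Real.logb 2 (1 - e) ≤ 0 := Real.logb_nonpos one_lt_two (by linarith) (by linarith)
  have : e * Real.logb 2 e ≤ 0 := mul_nonpos_of_nonneg_of_nonpos h0 l1
  have : (1 - e) * Real.logb 2 (1 - e) ≤ 0 :=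
    mul_nonpos_of_nonneg_of_nonpos (by linarith) l2
  unfold binEnt2; linarith

lemma card_filter_card_le (n m : ℕ) :
    (Finset.univ.filter fun s : Finset (Fin n) => s.card ≤ m).card
      = ∑ k ∈ Finset.range (m+1), n.choose k := by
  have h : (Finset.univ.filter fun s : Finset (Fin n) => s.card ≤ m)
      = (Finset.range (m+1)).biUnion (fun k => Finset.powersetCard k Finset.univ) := by
    ext s
    simp [Finset.mem_powersetCard, Nat.lt_succ_iff, eq_comm]
  rw [h, Finset.card_biUnion]
  · simp [Finset.card_powersetCard]
  · intro a _ b _ hab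
    apply Finset.disjoint_left.mpr
    intro s hs hs'
    rw [Finset.mem_powersetCard] at hs hs'
    exact hab (hs.2.symm.trans hs'.2)

lemma card_ball_le (n m : ℕ) (y : Str n) :
    (Finset.univ.filter fun x : Str n =>
      (Finset.univ.filter fun i => x i ≠ y i).card ≤ m).card
      ≤ ∑ k ∈ Finset.range (m+1), n.choose k := by
  rw [← card_filter_card_le n m]
  apply Finset.card_le_card_of_injOn (fun x => Finset.univ.filter fun i => x i ≠ y i)
  · intro x hx
    simp only [Finset.mem_coe, Finset.mem_filter, Finset.mem_univ, true_and] at hx ⊢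
    exact hx
  · intro x _ x' _ h
    funext i
    have hi := Finset.ext_iff.mp h i
    simp only [Finset.mem_filter, Finset.mem_univ, true_and] at hi
    revert hi
    cases hx : x i <;> cases hx' : x' i <;> cases hy : y i <;> simp

lemma sum_choose_le_rpow (n : ℕ) (e : ℝ) (h0 : 0 ≤ e) (h2 : e ≤ 1/2) :
    (∑ k ∈ Finset.range (⌊(n:ℝ) * e⌋₊ + 1), (n.choose k : ℝ))
      ≤ (2:ℝ) ^ ((n:ℝ) * binEnt2 e) := by
  rcases h0.eq_or_lt with he | he
  · -- e = 0
    have : (n:ℝ) * e = 0 := by rw [← he, mul_zero]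
    rw [this, Nat.floor_zero]
    have hb : binEnt2 e = 0 := by
      simp [binEnt2, ← he, Real.logb_zero]
    simp [hb]
  · -- 0 < e
    have he1 : e < 1 := by linarith
    have h1e : (0:ℝ) < 1 - e := by linarith
    set m := ⌊(n:ℝ) * e⌋₊ with hm
    have hmn : m ≤ n := by
      apply Nat.le_of_lt_succ
      rw [Nat.lt_succ_iff]
      calc m ≤ ⌊(n:ℝ)⌋₊ := Nat.floor_le_floor (by nlinarith [Nat.cast_nonneg (α := ℝ) n])
        _ = n := Nat.floor_natCast n
    set r := e / (1 - e) with hr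
    have hr0 : 0 < r := div_pos he h1e
    have hr1 : r ≤ 1 := by
      rw [div_le_one h1e]; linarith
    set A := e ^ ((n:ℝ)*e) * (1-e) ^ ((n:ℝ) - (n:ℝ)*e) with hA
    have hA0 : 0 < A := mul_pos (Real.rpow_pos_of_pos he _) (Real.rpow_pos_of_pos h1e _)
    -- A = (1-e)^n * r^(n*e)
    have hAeq : A = (1-e) ^ (n:ℝ) * r ^ ((n:ℝ)*e) := by
      rw [hA, hr, Real.div_rpow h0 h1e.le, Real.rpow_sub h1e]
      field_simp
    -- key pointwise bound
    have key : ∀ k ∈ Finset.range (m+1),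
        (n.choose k : ℝ) * A ≤ (n.choose k : ℝ) * (e ^ k * (1-e) ^ (n-k)) := by
      intro k hk
      rw [Finset.mem_range, Nat.lt_succ_iff] at hk
      have hkn : k ≤ n := le_trans hk hmn
      have hkne : (k:ℝ) ≤ (n:ℝ) * e := by
        calc (k:ℝ) ≤ (m:ℝ) := by exact_mod_cast hk
          _ ≤ (n:ℝ)*e := Nat.floor_le (by positivity)
      have hek : e ^ k * (1-e) ^ (n-k) = (1-e) ^ (n:ℝ) * r ^ ((k:ℝ)) := by
        rw [hr, Real.div_rpow h0 h1e.le, Real.rpow_natCast, Real.rpow_natCast,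
          Real.rpow_natCast]
        have hsplit : (1-e:ℝ)^n = (1-e)^(n-k) * (1-e)^k := by
          rw [← pow_add]; congr 1; omega
        rw [hsplit]; field_simp
      rw [hAeq, hek]
      apply mul_le_mul_of_nonneg_left
      · apply mul_le_mul_of_nonneg_left
        · exact Real.rpow_le_rpow_of_exponent_ge hr0 hr1 hkne
        · positivity
      · positivity
    -- sum bound
    have hsum : (∑ k ∈ Finset.range (m+1), (n.choose k : ℝ)) * A ≤ 1 := by
      rw [Finset.sum_mul]
      calc ∑ k ∈ Finset.range (m+1), (n.choose k : ℝ) * A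
          ≤ ∑ k ∈ Finset.range (m+1), (n.choose k : ℝ) * (e ^ k * (1-e) ^ (n-k)) :=
            Finset.sum_le_sum key
        _ ≤ ∑ k ∈ Finset.range (n+1), (n.choose k : ℝ) * (e ^ k * (1-e) ^ (n-k)) := by
            apply Finset.sum_le_sum_of_subset_of_nonneg
            · exact Finset.range_subset_range.mpr (by omega)
            · intro k _ _; positivity
        _ = (e + (1-e)) ^ n := by
            rw [add_pow]
            apply Finset.sum_congr rfl
            intro k _; ring
        _ = 1 := by norm_num
    have hfin : (∑ k ∈ Finset.range (m+1), (n.choose k : ℝ)) ≤ A⁻¹ := by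
      rw [inv_eq_one_div, le_div_iff₀ hA0]
      exact hsum
    have h2A : (2:ℝ) ^ ((n:ℝ) * binEnt2 e) = A⁻¹ := by
      have hexp : (n:ℝ) * binEnt2 e
          = Real.logb 2 e * (-((n:ℝ)*e)) + Real.logb 2 (1-e) * (-((n:ℝ) - (n:ℝ)*e)) := by
        unfold binEnt2; ring
      rw [hexp, Real.rpow_add two_pos, Real.rpow_mul (by norm_num), Real.rpow_mul (by norm_num),
        Real.rpow_logb two_pos (by norm_num) he, Real.rpow_logb two_pos (by norm_num) h1e,
        Real.rpow_neg h0, Real.rpow_neg h1e.le, hA, mul_inv]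
    rw [h2A]
    exact hfin

lemma Hmax_le_of_support {n : ℕ} {e : ℝ} (h0 : 0 ≤ e) (h2 : e ≤ 1/2)
    {q : Str n → Str n → ℝ} (hq0 : ∀ x y, 0 ≤ q x y) (hq1 : mass q ≤ 1)
    (hsupp : ∀ x y, e < errFrac x y → q x y = 0) :
    Hmax q ≤ (n:ℝ) * binEnt2 e := by
  classical
  set m := ⌊(n:ℝ) * e⌋₊ with hm
  set N : ℝ := ∑ k ∈ Finset.range (m+1), (n.choose k : ℝ) with hN
  have key : ∀ y : Str n, (∑ x, Real.sqrt (q x y)) ^ 2 ≤ N * ∑ x, q x y := by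
    intro y
    set S := Finset.univ.filter fun x : Str n =>
      (Finset.univ.filter fun i => x i ≠ y i).card ≤ m with hS
    have hvanish : ∀ x ∈ Finset.univ, x ∉ S → Real.sqrt (q x y) = 0 := by
      intro x _ hx
      simp only [hS, Finset.mem_filter, Finset.mem_univ, true_and, not_le] at hx
      have herr : e < errFrac x y := by
        unfold errFrac
        rcases Nat.eq_zero_or_pos n with hn | hn
        · exfalso
          have hcle : (Finset.univ.filter fun i => x i ≠ y i).card ≤ n := by
            simpa using Finset.card_filter_le Finset.univ (fun i => x i ≠ y i)
          omega
        · rw [lt_div_iff₀ (by exact_mod_cast hn)]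
          have hlt : ((n:ℝ) * e) < ((Finset.univ.filter fun i => x i ≠ y i).card : ℝ) :=
            Nat.lt_of_floor_lt hx
          linarith
      rw [hsupp x y herr, Real.sqrt_zero]
    have hrestrict : (∑ x, Real.sqrt (q x y)) = ∑ x ∈ S, Real.sqrt (q x y) :=
      (Finset.sum_subset (Finset.subset_univ S) hvanish).symm
    have hcs : (∑ x ∈ S, Real.sqrt (q x y)) ^ 2 ≤ S.card * ∑ x ∈ S, Real.sqrt (q x y) ^ 2 :=
      sq_sum_le_card_mul_sum_sq
    have hsq : ∑ x ∈ S, Real.sqrt (q x y) ^ 2 = ∑ x ∈ S, q x y :=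
      Finset.sum_congr rfl fun x _ => Real.sq_sqrt (hq0 x y)
    have hcard : (S.card : ℝ) ≤ N := by
      rw [hN]
      exact_mod_cast card_ball_le n m y
    have hsub : ∑ x ∈ S, q x y ≤ ∑ x, q x y :=
      Finset.sum_le_sum_of_subset_of_nonneg (Finset.subset_univ S)
        (fun x _ _ => hq0 x y)
    calc (∑ x, Real.sqrt (q x y)) ^ 2 = (∑ x ∈ S, Real.sqrt (q x y)) ^ 2 := by rw [hrestrict]
      _ ≤ S.card * ∑ x ∈ S, Real.sqrt (q x y) ^ 2 := hcs
      _ = S.card * ∑ x ∈ S, q x y := by rw [hsq]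
      _ ≤ N * ∑ x, q x y := by
          apply mul_le_mul hcard hsub (Finset.sum_nonneg fun x _ => hq0 x y)
            (le_trans (by positivity) hcard)
  have hT : (∑ y, (∑ x, Real.sqrt (q x y)) ^ 2) ≤ N := by
    calc (∑ y, (∑ x, Real.sqrt (q x y)) ^ 2) ≤ ∑ y, N * ∑ x, q x y :=
          Finset.sum_le_sum fun y _ => key y
      _ = N * ∑ y, ∑ x, q x y := by rw [Finset.mul_sum]
      _ = N * mass q := by rw [mass, Finset.sum_comm]
      _ ≤ N * 1 := by
          apply mul_le_mul_of_nonneg_left hq1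
          rw [hN]; positivity
      _ = N := mul_one N
  have hN2 : N ≤ (2:ℝ) ^ ((n:ℝ) * binEnt2 e) := sum_choose_le_rpow n e h0 h2
  have hT0 : (0:ℝ) ≤ ∑ y, (∑ x, Real.sqrt (q x y)) ^ 2 :=
    Finset.sum_nonneg fun y _ => sq_nonneg _
  rcases hT0.eq_or_lt with hz | hz
  · rw [Hmax, ← hz, Real.logb_zero]
    have hb := binEnt2_nonneg h0 (by linarith)
    positivity
  · rw [Hmax]
    calc Real.logb 2 (∑ y, (∑ x, Real.sqrt (q x y)) ^ 2)
        ≤ Real.logb 2 ((2:ℝ) ^ ((n:ℝ) * binEnt2 e)) :=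
          Real.logb_le_logb_of_le one_lt_two hz (le_trans hT hN2)
      _ = (n:ℝ) * binEnt2 e := Real.logb_rpow (by norm_num) (by norm_num)

set_option maxHeartbeats 2000000 in
/-- **Smooth max-entropy bound from a low error rate.** If the probability (under the
sub-normalized cq state `p`) of an event `Ω` containing `{e_XY > e_max}` is at most `κ`,
with `0 ≤ e_max < 1/2`, then `H_max^{√κ}(X|Y)_p ≤ n·h(e_max)`. -/
theorem smooth_Hmax_le_of_low_error
    (n : ℕ) (p : Str n → Str n → ℝ) (hp : IsSubState p)
    (e_max κ : ℝ) (he0 : 0 ≤ e_max) (he2 : e_max < 1 / 2) (hκ : 0 ≤ κ)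
    (Ω : Set (Str n × Str n))
    (hΩ : {xy : Str n × Str n | e_max < errFrac xy.1 xy.2} ⊆ Ω)
    (hPr : (∑ x, ∑ y, Ω.indicator (fun xy => p xy.1 xy.2) (x, y)) ≤ κ) :
    smoothHmax (Real.sqrt κ) p ≤ (n : ℝ) * binEnt2 e_max := by
  classical
  obtain ⟨hp0, hp1⟩ := hp
  have hbe : 0 ≤ (n:ℝ) * binEnt2 e_max := by
    have := binEnt2_nonneg he0 (by linarith)
    positivity
  set δ : ℝ := ∑ x, ∑ y, Ω.indicator (fun xy => p xy.1 xy.2) (x, y) with hδdef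
  have hδ0 : 0 ≤ δ := by
    apply Finset.sum_nonneg; intro x _
    apply Finset.sum_nonneg; intro y _
    exact Set.indicator_nonneg (fun xy _ => hp0 xy.1 xy.2) _
  -- mass decomposition
  have hpt : ∀ x y, (if (x,y) ∈ Ω then 0 else p x y)
      = p x y - Ω.indicator (fun xy => p xy.1 xy.2) (x,y) := by
    intro x y
    by_cases h : (x,y) ∈ Ω <;> simp [Set.indicator, h]
  have hs : (∑ x, ∑ y, (if (x,y) ∈ Ω then 0 else p x y)) = mass p - δ := by
    rw [mass, hδdef, ← Finset.sum_sub_distrib]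
    apply Finset.sum_congr rfl; intro x _
    rw [← Finset.sum_sub_distrib]
    exact Finset.sum_congr rfl fun y _ => hpt x y
  set s : ℝ := ∑ x, ∑ y, (if (x,y) ∈ Ω then 0 else p x y) with hsdef
  have hs0 : 0 ≤ s := by
    apply Finset.sum_nonneg; intro x _
    apply Finset.sum_nonneg; intro y _
    split <;> [rfl; exact hp0 x y]
  have hsle : s ≤ 1 - δ := by rw [hs]; linarith
  have hδκ : δ ≤ κ := hPr
  -- the support property used for Hmax
  have hsupp0 : ∀ (c : ℝ) (x y : Str n), e_max < errFrac x y →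
      (if (x,y) ∈ Ω then 0 else p x y / c) = 0 := by
    intro c x y herr
    have hmem : (x,y) ∈ Ω := hΩ herr
    simp only [hmem, if_pos]
  -- construct candidate q
  have main : ∃ q : Str n → Str n → ℝ, IsSubState q ∧ purDist p q ≤ Real.sqrt κ
      ∧ Hmax q ≤ (n:ℝ) * binEnt2 e_max := by
    by_cases hδ1 : δ < 1
    · -- scaled restriction
      have h1δ : (0:ℝ) < 1 - δ := by linarith
      refine ⟨fun x y => if (x,y) ∈ Ω then 0 else p x y / (1 - δ), ⟨?_, ?_⟩, ?_, ?_⟩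
      · intro x y
        by_cases h : (x,y) ∈ Ω
        · simp [h]
        · simp only [h, if_false]
          exact div_nonneg (hp0 x y) h1δ.le
      · -- mass ≤ 1
        have hmq : mass (fun x y => if (x,y) ∈ Ω then 0 else p x y / (1-δ)) = s / (1-δ) := by
          rw [mass, hsdef]
          rw [Finset.sum_div]
          apply Finset.sum_congr rfl; intro x _
          rw [Finset.sum_div]
          apply Finset.sum_congr rfl; intro y _
          split <;> simp
        rw [hmq, div_le_one h1δ]; exact hsle
      · -- purified distance
        have hmq : mass (fun x y => if (x,y) ∈ Ω then 0 else p x y / (1-δ)) = s / (1-δ) := by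
          rw [mass, hsdef, Finset.sum_div]
          apply Finset.sum_congr rfl; intro x _
          rw [Finset.sum_div]
          apply Finset.sum_congr rfl; intro y _
          split <;> simp
        have hterm1 : (∑ x, ∑ y, Real.sqrt (p x y *
            (if (x,y) ∈ Ω then 0 else p x y / (1-δ)))) = s / Real.sqrt (1-δ) := by
          rw [hsdef, Finset.sum_div]
          apply Finset.sum_congr rfl; intro x _
          rw [Finset.sum_div]
          apply Finset.sum_congr rfl; intro y _
          by_cases h : (x,y) ∈ Ω
          · simp [h]
          · rw [if_neg h, if_neg h]
            rw [div_eq_mul_inv, ← mul_assoc, ← sq, Real.sqrt_mul (sq_nonneg _),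
              Real.sqrt_sq (hp0 x y), Real.sqrt_inv, div_eq_mul_inv]
        have hterm2 : Real.sqrt ((1 - mass p) * (1 - s/(1-δ)))
            = (1 - mass p) / Real.sqrt (1-δ) := by
          have h1m : (0:ℝ) ≤ 1 - mass p := by linarith
          have heq : 1 - s/(1-δ) = (1 - mass p) / (1-δ) := by
            rw [hs]; field_simp; ring
          rw [heq, div_eq_mul_inv, ← mul_assoc, ← sq, Real.sqrt_mul (sq_nonneg _),
            Real.sqrt_sq h1m, Real.sqrt_inv, div_eq_mul_inv]
        have hgf : genFid p (fun x y => if (x,y) ∈ Ω then 0 else p x y / (1-δ))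
            = Real.sqrt (1-δ) := by
          rw [genFid, hmq, hterm1, hterm2, ← add_div, hs]
          have : mass p - δ + (1 - mass p) = 1 - δ := by ring
          rw [this, Real.div_sqrt]
        rw [purDist, hgf, Real.sq_sqrt h1δ.le]
        have : 1 - (1 - δ) = δ := by ring
        rw [this]
        exact Real.sqrt_le_sqrt hδκ
      · exact Hmax_le_of_support he0 he2.le
          (fun x y => by
            by_cases h : (x,y) ∈ Ω
            · simp [h]
            · simp only [h, if_false]
              exact div_nonneg (hp0 x y) h1δ.le)
          (by
            have hmq : mass (fun x y => if (x,y) ∈ Ω then 0 else p x y / (1-δ)) = s / (1-δ) := by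
              rw [mass, hsdef, Finset.sum_div]
              apply Finset.sum_congr rfl; intro x _
              rw [Finset.sum_div]
              apply Finset.sum_congr rfl; intro y _
              split <;> simp
            rw [hmq, div_le_one h1δ]; exact hsle)
          (hsupp0 (1-δ))
    · -- δ ≥ 1, so κ ≥ 1 and any q within distance 1 works
      have hκ1 : (1:ℝ) ≤ κ := le_trans (not_lt.mp hδ1) hδκ
      refine ⟨fun x y => if (x,y) ∈ Ω then 0 else p x y, ⟨?_, ?_⟩, ?_, ?_⟩
      · intro x y
        by_cases h : (x,y) ∈ Ω
        · simp [h]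
        · simp only [h, if_false]
          exact hp0 x y
      · show mass _ ≤ 1
        rw [mass]
        rw [show (∑ x, ∑ y, (if (x,y) ∈ Ω then 0 else p x y)) = s from rfl] at *
        calc s = mass p - δ := hs
          _ ≤ 1 := by linarith
      · calc purDist p _ ≤ 1 := by
              rw [purDist]
              calc Real.sqrt (1 - genFid p _ ^ 2) ≤ Real.sqrt 1 :=
                    Real.sqrt_le_sqrt (by nlinarith [sq_nonneg (genFid p
                      (fun x y => if (x,y) ∈ Ω then 0 else p x y))])
                _ = 1 := Real.sqrt_one
          _ ≤ Real.sqrt κ := by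
              rw [show (1:ℝ) = Real.sqrt 1 from Real.sqrt_one.symm]
              exact Real.sqrt_le_sqrt hκ1
      · refine Hmax_le_of_support he0 he2.le
          (fun x y => by
            by_cases h : (x,y) ∈ Ω
            · simp [h]
            · simp only [h, if_false]
              exact hp0 x y) ?_
          (fun x y herr => by
            have hmem : (x,y) ∈ Ω := hΩ herr
            simp only [hmem, if_pos])
        rw [show mass (fun x y => if (x,y) ∈ Ω then 0 else p x y) = s from rfl, hs]
        linarith
  obtain ⟨q, hq, hd, hH⟩ := main
  rw [smoothHmax]
  by_cases hb : BddBelow {h : ℝ | ∃ q' : Str n → Str n → ℝ,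
      IsSubState q' ∧ purDist p q' ≤ Real.sqrt κ ∧ h = Hmax q'}
  · exact le_trans (csInf_le hb ⟨q, hq, hd, rfl⟩) hH
  · rw [Real.sInf_of_not_bddBelow hb]
    exact hbe
end
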